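/- arXiv:1509.04111 — 11 statements merged into one kernel-verified Lean document; each statement's English description precedes it below -/
import Mathlib

section
/- Let ψ be a solution of the scalar sojourn-time recursion. Then for all n ≥ 1 and all m with 0 ≤ m < K, ψ(n,m) = B_s(n+m, K−m)·(μ1/(μ1+s))^n + Σ_{k=m}^{K−1} a_s(n+k)·B_s(n+m, k−m)·ψ(n−1,k). -/
noncomputable def aS (lam mu0 mu1 s : ℝ) (K k : ℕ) : ℝ :=
  if k ≤ K then mu0 / (lam + mu0 + s) else mu1 / (lam + mu1 + s)

noncomputable def bS (lam mu0 mu1 s : ℝ) (K k : ℕ) : ℝ :=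
  if k ≤ K then lam / (lam + mu0 + s) else lam / (lam + mu1 + s)

noncomputable def BS (lam mu0 mu1 s : ℝ) (K k : ℕ) : ℕ → ℝ
  | 0 => 1
  | h + 1 => BS lam mu0 mu1 s K k h * bS lam mu0 mu1 s K (k + h)

theorem BS_succ_left (lam mu0 mu1 s : ℝ) (K k h : ℕ) :
    BS lam mu0 mu1 s K k (h + 1) =
      bS lam mu0 mu1 s K k * BS lam mu0 mu1 s K (k + 1) h := by
  induction h with
  | zero => simp [BS]
  | succ h ih =>
    rw [BS, ih, mul_assoc, show k + (h + 1) = (k + 1) + h by omega, ← BS]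

/-- the recursive formula for ψ(n,m), Lemma 2.1 of the paper. -/
theorem statement0 (lam mu0 mu1 s : ℝ) (K : ℕ)
    (hlam : 0 < lam) (hmu0 : 0 < mu0) (hmu1 : 0 < mu1) (hs : 0 < s) (hK : 1 ≤ K)
    (ψ : ℕ → ℕ → ℝ)
    (h0 : ∀ m, ψ 0 m = 1)
    (hle : ∀ n m, 1 ≤ n → n + m ≤ K →
      (lam + mu0 + s) * ψ n m = mu0 * ψ (n - 1) m + lam * ψ n (m + 1))
    (hgt : ∀ n m, 1 ≤ n → K < n + m →
      (lam + mu1 + s) * ψ n m = mu1 * ψ (n - 1) m + lam * ψ n (m + 1))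
    (hhi : ∀ n m, K ≤ m → ψ n m = (mu1 / (mu1 + s)) ^ n) :
    ∀ n m, 1 ≤ n → m < K →
      ψ n m = BS lam mu0 mu1 s K (n + m) (K - m) * (mu1 / (mu1 + s)) ^ n +
        ∑ k ∈ Finset.Icc m (K - 1),
          aS lam mu0 mu1 s K (n + k) * BS lam mu0 mu1 s K (n + m) (k - m) * ψ (n - 1) k := by
  have hstep : ∀ n m, 1 ≤ n → ψ n m =
      aS lam mu0 mu1 s K (n + m) * ψ (n - 1) m +
      bS lam mu0 mu1 s K (n + m) * ψ n (m + 1) := by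
    intro n m hn
    by_cases h : n + m ≤ K
    · have hL : lam + mu0 + s ≠ 0 := by positivity
      have h2 := hle n m hn h
      simp only [aS, bS, if_pos h]
      field_simp
      linear_combination h2
    · have hL : lam + mu1 + s ≠ 0 := by positivity
      have h2 := hgt n m hn (by omega)
      simp only [aS, bS, if_neg h]
      field_simp
      linear_combination h2
  intro n m hn hm
  have key : ∀ d m, m + d = K → 1 ≤ d →
      ψ n m = BS lam mu0 mu1 s K (n + m) (K - m) * (mu1 / (mu1 + s)) ^ n +
        ∑ k ∈ Finset.Icc m (K - 1),
          aS lam mu0 mu1 s K (n + k) * BS lam mu0 mu1 s K (n + m) (k - m) * ψ (n - 1) k := by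
    intro d
    induction d with
    | zero => intro m _ h; omega
    | succ d ih =>
      intro m hmd _
      rcases Nat.eq_zero_or_pos d with hd | hd
      · subst hd
        have hKm : K - m = 1 := by omega
        have hK1 : K - 1 = m := by omega
        rw [hstep n m hn, hhi n (m + 1) (by omega), hKm, hK1]
        simp [BS, Finset.Icc_self]
        ring
      · have hIH := ih (m + 1) (by omega) hd
        rw [hstep n m hn, hIH]
        have hsum : Finset.Icc m (K - 1) = insert m (Finset.Icc (m + 1) (K - 1)) := by
          ext x; simp only [Finset.mem_Icc, Finset.mem_insert]; omega
        rw [hsum, Finset.sum_insert (by simp)]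
        have hBhead : BS lam mu0 mu1 s K (n + m) (K - m) =
            bS lam mu0 mu1 s K (n + m) * BS lam mu0 mu1 s K (n + (m + 1)) (K - (m + 1)) := by
          rw [show K - m = (K - (m + 1)) + 1 by omega, BS_succ_left, Nat.add_assoc]
        have hBsum : ∀ k ∈ Finset.Icc (m + 1) (K - 1),
            aS lam mu0 mu1 s K (n + k) * BS lam mu0 mu1 s K (n + m) (k - m) * ψ (n - 1) k =
            bS lam mu0 mu1 s K (n + m) *
              (aS lam mu0 mu1 s K (n + k) * BS lam mu0 mu1 s K (n + (m + 1)) (k - (m + 1)) *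
                ψ (n - 1) k) := by
          intro k hk
          simp only [Finset.mem_Icc] at hk
          rw [show k - m = (k - (m + 1)) + 1 by omega, BS_succ_left, Nat.add_assoc]
          ring
        rw [hBhead, Finset.sum_congr rfl hBsum, ← Finset.mul_sum,
          Nat.sub_self]
        simp only [BS]
        ring
  exact key (K - m) m (by omega) (by omega)
end

section
/- Let ψ be a solution of the scalar sojourn-time recursion with 0 ≤ ψ(n,m) ≤ 1 for all n, m, and let z be a real number with |z| < 1. Define φ(z,m) = Σ_{h=0}^∞ ψ(K+h+1,m)·z^h. Then for every m ≥ 0 this series converges and (λ+μ1·(1−z)+s)·φ(z,m) = μ1·ψ(K,m) + λ·φ(z,m+1). -/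
/-- the z-transform φ(z,m) converges and satisfies the recursive relation
(λ + μ1(1−z) + s)·φ(z,m) = μ1·ψ(K,m) + λ·φ(z,m+1). -/
theorem statement3 (lam mu0 mu1 s : ℝ) (K : ℕ)
    (hlam : 0 < lam) (hmu0 : 0 < mu0) (hmu1 : 0 < mu1) (hs : 0 < s) (hK : 1 ≤ K)
    (ψ : ℕ → ℕ → ℝ)
    (h0 : ∀ m, ψ 0 m = 1)
    (hle : ∀ n m, 1 ≤ n → n + m ≤ K →
      (lam + mu0 + s) * ψ n m = mu0 * ψ (n - 1) m + lam * ψ n (m + 1))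
    (hgt : ∀ n m, 1 ≤ n → K < n + m →
      (lam + mu1 + s) * ψ n m = mu1 * ψ (n - 1) m + lam * ψ n (m + 1))
    (hhi : ∀ n m, K ≤ m → ψ n m = (mu1 / (mu1 + s)) ^ n)
    (hbd : ∀ n m, 0 ≤ ψ n m ∧ ψ n m ≤ 1)
    (z : ℝ) (hz : |z| < 1) :
    ∀ m : ℕ,
      Summable (fun h : ℕ => ψ (K + h + 1) m * z ^ h) ∧
      (lam + mu1 * (1 - z) + s) * (∑' h : ℕ, ψ (K + h + 1) m * z ^ h) =
        mu1 * ψ K m + lam * ∑' h : ℕ, ψ (K + h + 1) (m + 1) * z ^ h := by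
  intro m
  have habs : ∀ n m, |ψ n m| ≤ 1 := by
    intro n m
    rcases hbd n m with ⟨h1, h2⟩
    rw [abs_le]; constructor <;> linarith
  have hzsum : Summable (fun h : ℕ => |z| ^ h) :=
    summable_geometric_of_lt_one (abs_nonneg z) hz
  have key : ∀ a : ℕ → ℝ, (∀ h, |a h| ≤ 1) → Summable (fun h : ℕ => a h * z ^ h) := by
    intro a ha
    apply Summable.of_abs
    apply hzsum.of_nonneg_of_le (fun h => abs_nonneg _)
    intro h
    rw [abs_mul, abs_pow]
    calc |a h| * |z| ^ h ≤ 1 * |z| ^ h :=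
          mul_le_mul_of_nonneg_right (ha h) (pow_nonneg (abs_nonneg z) h)
      _ = |z| ^ h := one_mul _
  have hS : ∀ m, Summable (fun h : ℕ => ψ (K + h + 1) m * z ^ h) :=
    fun m => key _ (fun h => habs _ _)
  have hT : Summable (fun h : ℕ => ψ (K + h) m * z ^ h) :=
    key _ (fun h => habs _ _)
  have hrec : ∀ h : ℕ, (lam + mu1 + s) * ψ (K + h + 1) m
      = mu1 * ψ (K + h) m + lam * ψ (K + h + 1) (m + 1) := by
    intro h
    have := hgt (K + h + 1) m (by omega) (by omega)
    simpa using this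
  have e1 : (lam + mu1 + s) * (∑' h : ℕ, ψ (K + h + 1) m * z ^ h)
      = mu1 * (∑' h : ℕ, ψ (K + h) m * z ^ h)
        + lam * (∑' h : ℕ, ψ (K + h + 1) (m + 1) * z ^ h) := by
    rw [← tsum_mul_left, ← tsum_mul_left, ← tsum_mul_left,
      ← Summable.tsum_add (hT.mul_left mu1) ((hS (m + 1)).mul_left lam)]
    congr 1
    ext h
    linear_combination z ^ h * hrec h
  have e2 : (∑' h : ℕ, ψ (K + h) m * z ^ h)
      = ψ K m + z * (∑' h : ℕ, ψ (K + h + 1) m * z ^ h) := by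
    rw [Summable.tsum_eq_zero_add hT, ← tsum_mul_left]
    congr 1
    · simp
    congr 1
    ext h
    ring
  refine ⟨hS m, ?_⟩
  linear_combination e1 + mu1 * e2
end

section
/- Let ψ be a solution of the scalar sojourn-time recursion with 0 ≤ ψ(n,m) ≤ 1 for all n, m, let z be a real number with 0 ≤ z < 1, and define φ(z,m) = Σ_{h=0}^∞ ψ(K+h+1,m)·z^h. Then for every m with 0 ≤ m ≤ K, φ(z,m) = Σ_{h=0}^{K−1−m} (μ1·λ^h/(λ+μ1·(1−z)+s)^{h+1})·ψ(K,m+h) + (λ/(λ+μ1·(1−z)+s))^{K−m} · (μ1/(μ1+s))^{K+1} · (μ1+s)/(μ1·(1−z)+s). -/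
/-- closed form of φ(z,m) for 0 ≤ m ≤ K. -/
theorem statement4 (lam mu0 mu1 s : ℝ) (K : ℕ)
    (hlam : 0 < lam) (hmu0 : 0 < mu0) (hmu1 : 0 < mu1) (hs : 0 < s) (hK : 1 ≤ K)
    (ψ : ℕ → ℕ → ℝ)
    (h0 : ∀ m, ψ 0 m = 1)
    (hle : ∀ n m, 1 ≤ n → n + m ≤ K →
      (lam + mu0 + s) * ψ n m = mu0 * ψ (n - 1) m + lam * ψ n (m + 1))
    (hgt : ∀ n m, 1 ≤ n → K < n + m →
      (lam + mu1 + s) * ψ n m = mu1 * ψ (n - 1) m + lam * ψ n (m + 1))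
    (hhi : ∀ n m, K ≤ m → ψ n m = (mu1 / (mu1 + s)) ^ n)
    (hbd : ∀ n m, 0 ≤ ψ n m ∧ ψ n m ≤ 1)
    (z : ℝ) (hz0 : 0 ≤ z) (hz1 : z < 1) :
    ∀ m : ℕ, m ≤ K →
      (∑' h : ℕ, ψ (K + h + 1) m * z ^ h) =
        (∑ h ∈ Finset.range (K - m),
          mu1 * lam ^ h / (lam + mu1 * (1 - z) + s) ^ (h + 1) * ψ K (m + h)) +
        (lam / (lam + mu1 * (1 - z) + s)) ^ (K - m) * (mu1 / (mu1 + s)) ^ (K + 1) *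
          ((mu1 + s) / (mu1 * (1 - z) + s)) := by
  set A : ℝ := lam + mu1 * (1 - z) + s with hAdef
  have hA : 0 < A := by
    have : 0 < 1 - z := by linarith
    have : 0 < mu1 * (1 - z) := mul_pos hmu1 this
    rw [hAdef]; linarith
  have hA0 : A ≠ 0 := ne_of_gt hA
  set r : ℝ := mu1 / (mu1 + s) with hrdef
  have hms : 0 < mu1 + s := by linarith
  have hr0 : 0 ≤ r := le_of_lt (div_pos hmu1 hms)
  have hr1 : r < 1 := (div_lt_one hms).2 (by linarith)
  have hrz : r * z < 1 := by nlinarith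
  have hrz0 : 0 ≤ r * z := mul_nonneg hr0 hz0
  have hden : mu1 * (1 - z) + s ≠ 0 := by
    have : 0 < mu1 * (1 - z) + s := by nlinarith
    exact ne_of_gt this
  -- summability of the shifted series
  have hsum : ∀ (c : ℕ) (m : ℕ), Summable (fun h : ℕ => ψ (c + h) m * z ^ h) := by
    intro c m
    apply Summable.of_nonneg_of_le
      (fun h => mul_nonneg (hbd _ _).1 (pow_nonneg hz0 _))
      (fun h => ?_) (summable_geometric_of_lt_one hz0 hz1)
    calc ψ (c + h) m * z ^ h ≤ 1 * z ^ h :=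
          mul_le_mul_of_nonneg_right (hbd _ _).2 (pow_nonneg hz0 _)
      _ = z ^ h := one_mul _
  suffices H : ∀ d m, m + d = K →
      (∑' h : ℕ, ψ (K + h + 1) m * z ^ h) =
        (∑ h ∈ Finset.range (K - m),
          mu1 * lam ^ h / A ^ (h + 1) * ψ K (m + h)) +
        (lam / A) ^ (K - m) * r ^ (K + 1) * ((mu1 + s) / (mu1 * (1 - z) + s)) by
    intro m hm
    exact H (K - m) m (by omega)
  intro d
  induction d with
  | zero =>
      intro m hm
      have hmK : m = K := by omega
      rw [hmK]
      have hKm : K - K = 0 := by omega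
      rw [hKm]
      simp only [Finset.range_zero, Finset.sum_empty, pow_zero, zero_add, one_mul]
      have h1 : (∑' h : ℕ, ψ (K + h + 1) K * z ^ h)
          = ∑' h : ℕ, r ^ (K + 1) * (r * z) ^ h := by
        apply tsum_congr; intro h
        rw [hhi _ _ (le_refl K), show K + h + 1 = (K + 1) + h by omega, pow_add, mul_pow]
        ring
      rw [h1, tsum_mul_left, tsum_geometric_of_lt_one hrz0 hrz]
      have h2 : 1 - r * z = (mu1 * (1 - z) + s) / (mu1 + s) := by
        field_simp [hrdef]
        have hr' : r * (mu1 + s) = mu1 := by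
          rw [hrdef]; exact div_mul_cancel₀ mu1 (ne_of_gt hms)
        linear_combination (-z) * hr'
      rw [h2, inv_div]
  | succ d ih =>
      intro m hm
      have hm1 : (m + 1) + d = K := by omega
      have hIH := ih (m + 1) hm1
      -- key functional equation
      have key : A * (∑' h : ℕ, ψ (K + h + 1) m * z ^ h)
          = mu1 * ψ K m + lam * (∑' h : ℕ, ψ (K + h + 1) (m + 1) * z ^ h) := by
        have hshift : (∑' h : ℕ, ψ (K + h) m * z ^ h)
            = ψ K m + z * (∑' h : ℕ, ψ (K + h + 1) m * z ^ h) := by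
          rw [Summable.tsum_eq_zero_add (hsum K m)]
          simp only [pow_zero, mul_one, add_zero]
          congr 1
          rw [← tsum_mul_left]
          apply tsum_congr; intro h
          have : K + (h + 1) = K + h + 1 := by ring
          rw [this]
          ring
        have hterms : ∀ h : ℕ, (lam + mu1 + s) * (ψ (K + h + 1) m * z ^ h)
            = mu1 * (ψ (K + h) m * z ^ h) + lam * (ψ (K + h + 1) (m + 1) * z ^ h) := by
          intro h
          have hrec := hgt (K + h + 1) m (by omega) (by omega)
          have : K + h + 1 - 1 = K + h := by omega
          rw [this] at hrec
          linear_combination z ^ h * hrec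
        have hsum1 : Summable (fun h : ℕ => mu1 * (ψ (K + h) m * z ^ h)) :=
          (hsum K m).mul_left mu1
        have hsum2 : Summable (fun h : ℕ => lam * (ψ (K + h + 1) (m + 1) * z ^ h)) := by
          have := hsum (K + 1) (m + 1)
          simp only [show ∀ h : ℕ, K + 1 + h = K + h + 1 from fun h => by omega] at this
          exact this.mul_left lam
        have hlhs : (∑' h : ℕ, (lam + mu1 + s) * (ψ (K + h + 1) m * z ^ h))
            = mu1 * (∑' h : ℕ, ψ (K + h) m * z ^ h)
              + lam * (∑' h : ℕ, ψ (K + h + 1) (m + 1) * z ^ h) := by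
          rw [← tsum_mul_left, ← tsum_mul_left, ← Summable.tsum_add hsum1 hsum2]
          exact tsum_congr hterms
        have hL : (∑' h : ℕ, (lam + mu1 + s) * (ψ (K + h + 1) m * z ^ h))
            = (lam + mu1 + s) * (∑' h : ℕ, ψ (K + h + 1) m * z ^ h) := tsum_mul_left
        rw [hL, hshift] at hlhs
        rw [hAdef]
        linear_combination hlhs
      -- solve for φ(m)
      have hphi : (∑' h : ℕ, ψ (K + h + 1) m * z ^ h)
          = mu1 * ψ K m / A + (lam / A) * (∑' h : ℕ, ψ (K + h + 1) (m + 1) * z ^ h) := by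
        field_simp
        linarith [key]
      rw [hphi, hIH]
      have hKm : K - m = d + 1 := by omega
      have hKm1 : K - (m + 1) = d := by omega
      rw [hKm, hKm1]
      rw [Finset.sum_range_succ']
      simp only [pow_zero, pow_one, Nat.add_zero, mul_one]
      have hsumshift : (∑ h ∈ Finset.range d, mu1 * lam ^ (h + 1) / A ^ (h + 1 + 1) * ψ K (m + (h + 1)))
          = ∑ h ∈ Finset.range d, (lam / A) * (mu1 * lam ^ h / A ^ (h + 1) * ψ K (m + 1 + h)) := by
        apply Finset.sum_congr rfl; intro h _
        have h1 : m + (h + 1) = m + 1 + h := by omega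
        rw [h1]
        field_simp
        ring
      rw [hsumshift, ← Finset.mul_sum]
      rw [pow_succ']
      ring
end

section
/- Assume additionally λ < μ1. Let ψ be a solution of the scalar sojourn-time recursion with 0 ≤ ψ(n,m) ≤ 1 for all n, m, and define φ(z,m) = Σ_{h=0}^∞ ψ(K+h+1,m)·z^h for 0 ≤ z < 1. Then for every m with 0 ≤ m ≤ K, φ(λ/μ1, m) = Σ_{h=0}^{K−1−m} (λ/μ1)^h·(μ1/(μ1+s))^{h+1}·ψ(K,m+h) + (μ1/(μ1−λ+s))·(λ/μ1)^{K−m}·(μ1/(μ1+s))^{2K−m}. -/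
/-- the value of φ(λ/μ1, m) for 0 ≤ m ≤ K. -/
theorem statement5 (lam mu0 mu1 s : ℝ) (K : ℕ)
    (hlam : 0 < lam) (hmu0 : 0 < mu0) (hmu1 : 0 < mu1) (hs : 0 < s) (hK : 1 ≤ K)
    (hstab : lam < mu1)
    (ψ : ℕ → ℕ → ℝ)
    (h0 : ∀ m, ψ 0 m = 1)
    (hle : ∀ n m, 1 ≤ n → n + m ≤ K →
      (lam + mu0 + s) * ψ n m = mu0 * ψ (n - 1) m + lam * ψ n (m + 1))
    (hgt : ∀ n m, 1 ≤ n → K < n + m →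
      (lam + mu1 + s) * ψ n m = mu1 * ψ (n - 1) m + lam * ψ n (m + 1))
    (hhi : ∀ n m, K ≤ m → ψ n m = (mu1 / (mu1 + s)) ^ n)
    (hbd : ∀ n m, 0 ≤ ψ n m ∧ ψ n m ≤ 1) :
    ∀ m : ℕ, m ≤ K →
      (∑' h : ℕ, ψ (K + h + 1) m * (lam / mu1) ^ h) =
        (∑ h ∈ Finset.range (K - m),
          (lam / mu1) ^ h * (mu1 / (mu1 + s)) ^ (h + 1) * ψ K (m + h)) +
        mu1 / (mu1 - lam + s) * (lam / mu1) ^ (K - m) * (mu1 / (mu1 + s)) ^ (2 * K - m) := by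
  intro m hmK
  set z := lam / mu1 with hz
  set a := mu1 / (mu1 + s) with ha
  have hms : 0 < mu1 + s := by linarith
  have hden : 0 < mu1 - lam + s := by linarith
  have hz0 : 0 < z := div_pos hlam hmu1
  have hz1 : z < 1 := (div_lt_one hmu1).2 hstab
  have ha0 : 0 < a := div_pos hmu1 hms
  have ha1 : a < 1 := (div_lt_one hms).2 (by linarith)
  have hsum : ∀ n0 m', Summable (fun h : ℕ => ψ (n0 + h) m' * z ^ h) := by
    intro n0 m'
    refine Summable.of_nonneg_of_le
      (fun h => mul_nonneg (hbd _ _).1 (pow_nonneg hz0.le h))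
      (fun h => ?_) (summable_geometric_of_lt_one hz0.le hz1)
    calc ψ (n0 + h) m' * z ^ h ≤ 1 * z ^ h :=
          mul_le_mul_of_nonneg_right (hbd _ _).2 (pow_nonneg hz0.le h)
      _ = z ^ h := one_mul _
  set φ : ℕ → ℝ := fun m' => ∑' h : ℕ, ψ (K + h + 1) m' * z ^ h with hφ
  have hS1 : ∀ m', Summable (fun h : ℕ => ψ (K + h) m' * z ^ h) := fun m' => hsum K m'
  have hS2 : ∀ m', Summable (fun h : ℕ => ψ (K + h + 1) m' * z ^ h) := by
    intro m'
    have := hsum (K + 1) m'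
    simpa [Nat.add_right_comm] using this
  have hmuz : mu1 * z = lam := by
    rw [hz]; field_simp
  have step : ∀ m', φ m' = a * ψ K m' + z * a * φ (m' + 1) := by
    intro m'
    have h1 : ∀ h : ℕ, (lam + mu1 + s) * (ψ (K + h + 1) m' * z ^ h)
        = mu1 * (ψ (K + h) m' * z ^ h) + lam * (ψ (K + h + 1) (m' + 1) * z ^ h) := by
      intro h
      have hr := hgt (K + h + 1) m' (by omega) (by omega)
      have : (K + h + 1) - 1 = K + h := by omega
      rw [this] at hr
      calc (lam + mu1 + s) * (ψ (K + h + 1) m' * z ^ h)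
          = ((lam + mu1 + s) * ψ (K + h + 1) m') * z ^ h := by ring
        _ = (mu1 * ψ (K + h) m' + lam * ψ (K + h + 1) (m' + 1)) * z ^ h := by rw [hr]
        _ = _ := by ring
    have e1 : (lam + mu1 + s) * φ m'
        = mu1 * (∑' h : ℕ, ψ (K + h) m' * z ^ h) + lam * φ (m' + 1) := by
      calc (lam + mu1 + s) * φ m'
          = ∑' h : ℕ, (lam + mu1 + s) * (ψ (K + h + 1) m' * z ^ h) := tsum_mul_left.symm
        _ = ∑' h : ℕ, (mu1 * (ψ (K + h) m' * z ^ h)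
              + lam * (ψ (K + h + 1) (m' + 1) * z ^ h)) := tsum_congr h1
        _ = (∑' h : ℕ, mu1 * (ψ (K + h) m' * z ^ h))
              + ∑' h : ℕ, lam * (ψ (K + h + 1) (m' + 1) * z ^ h) :=
            Summable.tsum_add ((hS1 m').mul_left mu1) ((hS2 (m' + 1)).mul_left lam)
        _ = _ := by rw [tsum_mul_left, tsum_mul_left]
    have eshift : (∑' h : ℕ, ψ (K + h) m' * z ^ h) = ψ K m' + z * φ m' := by
      rw [Summable.tsum_eq_zero_add (hS1 m')]
      congr 1
      · simp
      · calc (∑' h : ℕ, ψ (K + (h + 1)) m' * z ^ (h + 1))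
            = ∑' h : ℕ, z * (ψ (K + h + 1) m' * z ^ h) := by
              refine tsum_congr fun h => ?_
              have : K + (h + 1) = K + h + 1 := by omega
              rw [this]; ring
          _ = z * φ m' := tsum_mul_left
    rw [eshift] at e1
    have h5 : mu1 * (ψ K m' + z * φ m') = mu1 * ψ K m' + lam * φ m' := by
      rw [mul_add, ← mul_assoc, hmuz]
    rw [h5] at e1
    have e3 : (mu1 + s) * φ m' = mu1 * ψ K m' + lam * φ (m' + 1) := by linarith
    have e4 : φ m' = (mu1 * ψ K m' + lam * φ (m' + 1)) / (mu1 + s) := by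
      rw [eq_div_iff (ne_of_gt hms), mul_comm]; exact e3
    rw [e4, ha, hz]
    field_simp
  have haz : a * z = lam / (mu1 + s) := by
    rw [ha, hz]
    field_simp
  have haz1 : a * z < 1 := by
    rw [haz]; exact (div_lt_one hms).2 (by linarith)
  have hbase : φ K = mu1 / (mu1 - lam + s) * a ^ K := by
    have e : φ K = ∑' h : ℕ, a ^ (K + 1) * (a * z) ^ h := by
      refine tsum_congr fun h => ?_
      rw [hhi (K + h + 1) K le_rfl, mul_pow]
      ring
    rw [e, tsum_mul_left, tsum_geometric_of_lt_one (by positivity) haz1]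
    have h1az : 1 - a * z = (mu1 - lam + s) / (mu1 + s) := by
      rw [haz]
      field_simp
      ring
    rw [h1az, pow_succ, ha]
    field_simp
  have main : ∀ j : ℕ, j ≤ K → φ (K - j) =
      (∑ h ∈ Finset.range (K - (K - j)), z ^ h * a ^ (h + 1) * ψ K ((K - j) + h)) +
        mu1 / (mu1 - lam + s) * z ^ (K - (K - j)) * a ^ (2 * K - (K - j)) := by
    intro j
    induction j with
    | zero =>
      intro _
      rw [show K - 0 = K from by omega, show K - K = 0 from by omega,
          show 2 * K - K = K from by omega]
      simpa using hbase
    | succ j ih =>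
      intro hj
      have hj' : j ≤ K := by omega
      rw [step (K - (j + 1)), show (K - (j + 1)) + 1 = K - j from by omega, ih hj']
      rw [show K - (K - j) = j from by omega, show K - (K - (j + 1)) = j + 1 from by omega,
          show 2 * K - (K - j) = K + j from by omega,
          show 2 * K - (K - (j + 1)) = K + j + 1 from by omega]
      rw [Finset.sum_range_succ']
      have hsum' : ∑ h ∈ Finset.range j, z ^ (h + 1) * a ^ ((h + 1) + 1) * ψ K ((K - (j + 1)) + (h + 1))
          = z * a * ∑ h ∈ Finset.range j, z ^ h * a ^ (h + 1) * ψ K ((K - j) + h) := by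
        rw [Finset.mul_sum]
        refine Finset.sum_congr rfl fun h _ => ?_
        rw [show (K - (j + 1)) + (h + 1) = (K - j) + h from by omega]
        ring
      rw [hsum']
      simp only [pow_zero, pow_one, one_mul, add_zero]
      ring
  have hmain := main (K - m) (by omega)
  rw [show K - (K - m) = m from by omega] at hmain
  exact hmain
end

section
/- Assume additionally λ < μ1. Let ψ be a solution of the scalar sojourn-time recursion with 0 ≤ ψ(n,m) ≤ 1 for all n, m. Then the series Σ_{n=0}^∞ ψ(n+1,0)·π_n converges and equals π_0 · Σ_{h=0}^{K−1} [ (λ/μ0)^h·ψ(h+1,0) + (λ/μ0)^K·(λ/μ1)^h·(μ1/(μ1+s))^{h+1}·ψ(K,h) ] + π_0·(λ/μ0)^K·(λ/μ1)^K·(μ1/(μ1−λ))·(μ1/(μ1+s))^{2K}·(μ1−λ)/(μ1−λ+s). -/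
noncomputable def pi0 (lam mu0 mu1 : ℝ) (K : ℕ) : ℝ :=
  ((∑ n ∈ Finset.range (K + 1), (lam / mu0) ^ n) + lam / (mu1 - lam) * (lam / mu0) ^ K)⁻¹

noncomputable def piStat (lam mu0 mu1 : ℝ) (K n : ℕ) : ℝ :=
  if n ≤ K then (lam / mu0) ^ n * pi0 lam mu0 mu1 K
  else (mu1 / mu0) ^ K * (lam / mu1) ^ n * pi0 lam mu0 mu1 K

/-- the Laplace transform of the stationary sojourn time
(Proposition 2.2 of the paper). -/
theorem statement6 (lam mu0 mu1 s : ℝ) (K : ℕ)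
    (hlam : 0 < lam) (hmu0 : 0 < mu0) (hmu1 : 0 < mu1) (hs : 0 < s) (hK : 1 ≤ K)
    (hstab : lam < mu1)
    (ψ : ℕ → ℕ → ℝ)
    (h0 : ∀ m, ψ 0 m = 1)
    (hle : ∀ n m, 1 ≤ n → n + m ≤ K →
      (lam + mu0 + s) * ψ n m = mu0 * ψ (n - 1) m + lam * ψ n (m + 1))
    (hgt : ∀ n m, 1 ≤ n → K < n + m →
      (lam + mu1 + s) * ψ n m = mu1 * ψ (n - 1) m + lam * ψ n (m + 1))
    (hhi : ∀ n m, K ≤ m → ψ n m = (mu1 / (mu1 + s)) ^ n)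
    (hbd : ∀ n m, 0 ≤ ψ n m ∧ ψ n m ≤ 1) :
    Summable (fun n : ℕ => ψ (n + 1) 0 * piStat lam mu0 mu1 K n) ∧
    (∑' n : ℕ, ψ (n + 1) 0 * piStat lam mu0 mu1 K n) =
      pi0 lam mu0 mu1 K *
        (∑ h ∈ Finset.range K,
          ((lam / mu0) ^ h * ψ (h + 1) 0 +
            (lam / mu0) ^ K * (lam / mu1) ^ h * (mu1 / (mu1 + s)) ^ (h + 1) * ψ K h)) +
      pi0 lam mu0 mu1 K * (lam / mu0) ^ K * (lam / mu1) ^ K * (mu1 / (mu1 - lam)) *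
        (mu1 / (mu1 + s)) ^ (2 * K) * ((mu1 - lam) / (mu1 - lam + s)) := by
  set π0 := pi0 lam mu0 mu1 K with hπ0
  set x : ℝ := lam / mu1 with hxdef
  set β : ℝ := mu1 / (mu1 + s) with hβdef
  have hmu1s : 0 < mu1 + s := by linarith
  have hx0 : 0 < x := div_pos hlam hmu1
  have hx1 : x < 1 := (div_lt_one hmu1).2 hstab
  have hβ0 : 0 < β := div_pos hmu1 hmu1s
  have hβ1 : β < 1 := (div_lt_one hmu1s).2 (by linarith)
  have hxβ1 : x * β < 1 := by
    calc x * β < 1 * 1 := by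
          apply mul_lt_mul' hx1.le hβ1 hβ0.le one_pos
      _ = 1 := by ring
  have hxβ0 : 0 ≤ x * β := by positivity
  -- summability of weighted ψ series
  have hsumg : ∀ g : ℕ → ℝ, (∀ j, 0 ≤ g j ∧ g j ≤ 1) →
      Summable (fun j : ℕ => x ^ j * g j) := by
    intro g hg
    apply Summable.of_nonneg_of_le (fun j => mul_nonneg (by positivity) (hg j).1)
      (fun j => ?_) (summable_geometric_of_lt_one hx0.le hx1)
    calc x ^ j * g j ≤ x ^ j * 1 := by
          apply mul_le_mul_of_nonneg_left (hg j).2 (by positivity)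
      _ = x ^ j := by ring
  -- the tail generating functions
  set H : ℕ → ℝ := fun m => ∑' j : ℕ, x ^ j * ψ (K + 1 + j) m with hHdef
  have hHsum : ∀ m, Summable (fun j : ℕ => x ^ j * ψ (K + 1 + j) m) :=
    fun m => hsumg _ (fun j => hbd _ _)
  have hAsum : ∀ m, Summable (fun j : ℕ => x ^ j * ψ (K + j) m) :=
    fun m => hsumg _ (fun j => hbd _ _)
  -- key recursion for H
  have hHrec : ∀ m, (mu1 + s) * H m = mu1 * ψ K m + lam * H (m + 1) := by
    intro m
    have e1 : ∀ j : ℕ, (lam + mu1 + s) * (x ^ j * ψ (K + 1 + j) m) =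
        mu1 * (x ^ j * ψ (K + j) m) + lam * (x ^ j * ψ (K + 1 + j) (m + 1)) := by
      intro j
      have h := hgt (K + 1 + j) m (by omega) (by omega)
      have hn : K + 1 + j - 1 = K + j := by omega
      rw [hn] at h
      linear_combination x ^ j * h
    have eL : (lam + mu1 + s) * H m =
        mu1 * (∑' j : ℕ, x ^ j * ψ (K + j) m) + lam * H (m + 1) := by
      rw [hHdef]
      rw [← tsum_mul_left, ← tsum_mul_left (a := mu1), ← tsum_mul_left (a := lam)]
      rw [← Summable.tsum_add ((hAsum m).mul_left _) ((hHsum (m + 1)).mul_left _)]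
      exact tsum_congr e1
    have eA : (∑' j : ℕ, x ^ j * ψ (K + j) m) = ψ K m + x * H m := by
      rw [Summable.tsum_eq_zero_add (hAsum m)]
      simp only [pow_zero, Nat.add_zero, one_mul]
      congr 1
      rw [hHdef, ← tsum_mul_left]
      apply tsum_congr
      intro j
      have : K + (j + 1) = K + 1 + j := by omega
      rw [this]
      ring
    rw [eA] at eL
    have hmul : mu1 * x = lam := by
      rw [hxdef]; field_simp
    linear_combination eL + H m * hmul
  have hstep : ∀ m, H m = β * ψ K m + (x * β) * H (m + 1) := by
    intro m
    have h := hHrec m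
    have hne : mu1 + s ≠ 0 := ne_of_gt hmu1s
    have hm1 : mu1 ≠ 0 := ne_of_gt hmu1
    have hβeq : mu1 = β * (mu1 + s) := by
      rw [hβdef]; field_simp
    have hlameq : lam = (x * β) * (mu1 + s) := by
      rw [hβdef, hxdef]; field_simp
    apply mul_left_cancel₀ hne
    linear_combination h + ψ K m * hβeq + H (m + 1) * hlameq
  -- iterate
  have hiter : ∀ m, m ≤ K → H 0 =
      (∑ h ∈ Finset.range m, (x * β) ^ h * (β * ψ K h)) + (x * β) ^ m * H m := by
    intro m
    induction m with
    | zero => intro _; simp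
    | succ m ih =>
      intro hm
      rw [Finset.sum_range_succ, ih (by omega), hstep m]
      ring
  -- closed form for H K
  have hHK : H K = β ^ (K + 1) * (1 - x * β)⁻¹ := by
    rw [hHdef]
    have : ∀ j : ℕ, x ^ j * ψ (K + 1 + j) K = β ^ (K + 1) * (x * β) ^ j := by
      intro j
      rw [hhi (K + 1 + j) K le_rfl]
      rw [pow_add, mul_pow]
      ring
    simp only [this]
    rw [tsum_mul_left, tsum_geometric_of_lt_one hxβ0 hxβ1]
  have hH0 : H 0 = (∑ h ∈ Finset.range K, (x * β) ^ h * (β * ψ K h)) +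
      (x * β) ^ K * (β ^ (K + 1) * (1 - x * β)⁻¹) := by
    rw [hiter K le_rfl, hHK]
  -- summability of the full series
  have hπ0pos : 0 < π0 := by
    rw [hπ0, pi0]
    apply inv_pos.2
    apply add_pos_of_pos_of_nonneg
    · apply Finset.sum_pos (fun i _ => by positivity) ⟨0, Finset.mem_range.2 (by omega)⟩
    · have : 0 < mu1 - lam := by linarith
      positivity
  have hpiStat : ∀ n, 0 ≤ piStat lam mu0 mu1 K n := by
    intro n
    rw [piStat]
    split <;> positivity
  have hpiSummable : Summable (fun n => piStat lam mu0 mu1 K n) := by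
    rw [← summable_nat_add_iff (K + 1)]
    have : ∀ n : ℕ, piStat lam mu0 mu1 K (n + (K + 1)) =
        ((mu1 / mu0) ^ K * (lam / mu1) ^ (K + 1) * π0) * x ^ n := by
      intro n
      rw [piStat, if_neg (by omega), pow_add, hxdef]
      ring
    simp only [this]
    exact (summable_geometric_of_lt_one hx0.le hx1).mul_left _
  have hmain : Summable (fun n : ℕ => ψ (n + 1) 0 * piStat lam mu0 mu1 K n) := by
    apply Summable.of_nonneg_of_le
      (fun n => mul_nonneg (hbd _ _).1 (hpiStat n)) (fun n => ?_) hpiSummable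
    calc ψ (n + 1) 0 * piStat lam mu0 mu1 K n ≤ 1 * piStat lam mu0 mu1 K n := by
          apply mul_le_mul_of_nonneg_right (hbd _ _).2 (hpiStat n)
      _ = piStat lam mu0 mu1 K n := by ring
  refine ⟨hmain, ?_⟩
  -- split at K
  rw [← Summable.sum_add_tsum_nat_add K hmain]
  -- tail
  have htail : ∀ j : ℕ, ψ (j + K + 1) 0 * piStat lam mu0 mu1 K (j + K) =
      ((lam / mu0) ^ K * π0) * (x ^ j * ψ (K + 1 + j) 0) := by
    intro j
    have hidx : j + K + 1 = K + 1 + j := by omega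
    rw [hidx, piStat]
    rcases Nat.eq_zero_or_pos j with hj | hj
    · subst hj
      rw [if_pos (by omega)]
      simp
      ring
    · rw [if_neg (by omega)]
      have : (mu1 / mu0) ^ K * (lam / mu1) ^ (j + K) * π0 =
          ((lam / mu0) ^ K * π0) * x ^ j := by
        rw [hxdef, pow_add]
        rw [div_pow, div_pow, div_pow]
        field_simp
        ring_nf
        rw [mul_assoc, ← mul_pow, mul_inv_cancel₀ (ne_of_gt hmu0), one_pow, mul_one]
      rw [this]
      ring
  have htails : (∑' j : ℕ, ψ (j + K + 1) 0 * piStat lam mu0 mu1 K (j + K)) =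
      ((lam / mu0) ^ K * π0) * H 0 := by
    rw [hHdef, ← tsum_mul_left]
    exact tsum_congr htail
  have hheadterm : ∀ n ∈ Finset.range K, ψ (n + 1) 0 * piStat lam mu0 mu1 K n =
      π0 * ((lam / mu0) ^ n * ψ (n + 1) 0) := by
    intro n hn
    rw [Finset.mem_range] at hn
    rw [piStat, if_pos (by omega)]
    ring
  rw [Finset.sum_congr rfl hheadterm, htails, hH0]
  -- final algebra
  have hterm : ∀ h ∈ Finset.range K,
      π0 * ((lam / mu0) ^ h * ψ (h + 1) 0 +
        (lam / mu0) ^ K * (lam / mu1) ^ h * (mu1 / (mu1 + s)) ^ (h + 1) * ψ K h) =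
      π0 * ((lam / mu0) ^ h * ψ (h + 1) 0) +
        (lam / mu0) ^ K * π0 * ((x * β) ^ h * (β * ψ K h)) := by
    intro h _
    rw [← hxdef, ← hβdef, mul_pow, pow_succ]
    ring
  rw [Finset.mul_sum, Finset.sum_congr rfl hterm, Finset.sum_add_distrib]
  rw [mul_add, Finset.mul_sum]
  have htailconst : (lam / mu0) ^ K * π0 * ((x * β) ^ K * (β ^ (K + 1) * (1 - x * β)⁻¹)) =
      π0 * (lam / mu0) ^ K * (lam / mu1) ^ K * (mu1 / (mu1 - lam)) *
        (mu1 / (mu1 + s)) ^ (2 * K) * ((mu1 - lam) / (mu1 - lam + s)) := by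
    have h1 : (1 : ℝ) - x * β = (mu1 - lam + s) / (mu1 + s) := by
      rw [hxdef, hβdef]
      field_simp
      ring
    have h2 : (0 : ℝ) < mu1 - lam + s := by linarith
    have h3 : (0 : ℝ) < mu1 - lam := by linarith
    rw [h1, mul_pow, two_mul, pow_add, hβdef, hxdef]
    rw [inv_div]
    field_simp
    ring
  rw [htailconst]
  ring
end

section
/- Let R00 = (μ0+γ+λ)/(2μ0) − sqrt( ((μ0+γ+λ)/(2μ0))^2 − λ/μ0 ) and let R be the 2×2 real matrix with entries R(0,0) = R00, R(0,1) = 0, R(1,0) = (γ/μ1)·R00/(1−R00), R(1,1) = λ/μ1. Then R satisfies the matrix equation Λ − H3·R + M·R^2 = 0, where Λ = diag(λ,λ), M = diag(μ0,μ1), Γ3 is the 2×2 matrix with rows (γ,0) and (−γ,0), and H3 = M + Λ + Γ3. -/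
/-- the matrix R solves the quadratic matrix equation Λ − H3·R + M·R² = 0. -/
theorem statement9 (lam mu0 mu1 gam : ℝ)
    (hlam : 0 < lam) (hmu0 : 0 < mu0) (hmu1 : 0 < mu1) (hgam : 0 < gam)
    (R00 : ℝ)
    (hR00 : R00 = (mu0 + gam + lam) / (2 * mu0) -
      Real.sqrt (((mu0 + gam + lam) / (2 * mu0)) ^ 2 - lam / mu0))
    (R Lam M G3 H3 : Matrix (Fin 2) (Fin 2) ℝ)
    (hR : R = !![R00, 0; gam / mu1 * (R00 / (1 - R00)), lam / mu1])
    (hLam : Lam = !![lam, 0; 0, lam])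
    (hM : M = !![mu0, 0; 0, mu1])
    (hG3 : G3 = !![gam, 0; -gam, 0])
    (hH3 : H3 = M + Lam + G3) :
    Lam - H3 * R + M * R ^ 2 = 0 := by
  set s : ℝ := (mu0 + gam + lam) / (2 * mu0) with hs
  set D : ℝ := s ^ 2 - lam / mu0 with hD
  have hs1 : (s - 1) ^ 2 < D := by
    have h2s : 2 * s = (mu0 + gam + lam) / mu0 := by rw [hs]; field_simp
    have key : lam / mu0 + 1 < (mu0 + gam + lam) / mu0 := by
      rw [div_add' _ _ _ hmu0.ne', div_lt_div_iff₀ hmu0 hmu0]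
      nlinarith
    rw [hD]
    nlinarith [key, h2s]
  have hDpos : 0 < D := lt_of_le_of_lt (sq_nonneg _) hs1
  have hsq : Real.sqrt D ^ 2 = D := Real.sq_sqrt hDpos.le
  have hlt : s - 1 < Real.sqrt D := by
    rcases le_or_gt (s - 1) 0 with h | h
    · exact lt_of_le_of_lt h (Real.sqrt_pos.2 hDpos)
    · nlinarith [Real.sqrt_nonneg D, hsq]
  have hR00lt : R00 < 1 := by rw [hR00]; linarith
  have hne : (1 : ℝ) - R00 ≠ 0 := by linarith [hR00lt]
  have hquad : mu0 * R00 ^ 2 - (mu0 + gam + lam) * R00 + lam = 0 := by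
    have h2s : mu0 + gam + lam = 2 * mu0 * s := by field_simp [hs]; rw [hs]; field_simp
    rw [hR00, h2s]
    have : mu0 * (s - Real.sqrt D) ^ 2 - 2 * mu0 * s * (s - Real.sqrt D) + lam
        = mu0 * (Real.sqrt D ^ 2 - s ^ 2) + lam := by ring
    rw [this, hsq, hD]
    field_simp
    ring
  subst hR hLam hM hG3 hH3
  ext i j
  fin_cases i <;> fin_cases j <;>
    simp [Matrix.mul_apply, Fin.sum_univ_succ, pow_two]
  · linear_combination hquad
  · field_simp
    ring
  · field_simp
    ring
end

section
/- Assume additionally λ < μ1, and let R be the 2×2 real matrix with entries R(0,0) = R00, R(0,1) = 0, R(1,0) = (γ/μ1)·R00/(1−R00), R(1,1) = λ/μ1, where R00 = (μ0+γ+λ)/(2μ0) − sqrt( ((μ0+γ+λ)/(2μ0))^2 − λ/μ0 ). Then the eigenvalues of R are exactly R00 and λ/μ1, both lie in the open interval (0,1), the matrix I − R is invertible, and (I − R)^{−1} = Σ_{h=0}^∞ R^h. -/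
section Aux

attribute [local instance] Matrix.linftyOpNormedRing Matrix.linftyOpNormedAlgebra

open scoped Matrix

/-- Auxiliary version proved with the `L∞`-operator-norm instances in scope. STATEMENT 10: the eigenvalues of R are exactly R00 and λ/μ1, both in (0,1),
I − R is invertible, and (I − R)⁻¹ = Σ_{h=0}^∞ R^h. -/
theorem statement10_aux (lam mu0 mu1 gam : ℝ)
    (hlam : 0 < lam) (hmu0 : 0 < mu0) (hmu1 : 0 < mu1) (hgam : 0 < gam)
    (hstab : lam < mu1)
    (R00 : ℝ)
    (hR00 : R00 = (mu0 + gam + lam) / (2 * mu0) -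
      Real.sqrt (((mu0 + gam + lam) / (2 * mu0)) ^ 2 - lam / mu0))
    (R : Matrix (Fin 2) (Fin 2) ℝ)
    (hR : R = !![R00, 0; gam / mu1 * (R00 / (1 - R00)), lam / mu1]) :
    spectrum ℝ R = {R00, lam / mu1} ∧
    (0 < R00 ∧ R00 < 1) ∧
    (0 < lam / mu1 ∧ lam / mu1 < 1) ∧
    IsUnit ((1 : Matrix (Fin 2) (Fin 2) ℝ) - R) ∧
    ((1 : Matrix (Fin 2) (Fin 2) ℝ) - R)⁻¹ = ∑' h : ℕ, R ^ h := by
  set b : ℝ := (mu0 + gam + lam) / (2 * mu0) with hb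
  have hbpos : 0 < b := by positivity
  have hΔpos : 0 < b ^ 2 - lam / mu0 := by
    have h4 : b ^ 2 - lam / mu0 = ((mu0 + gam + lam) ^ 2 - 4 * lam * mu0) / (4 * mu0 ^ 2) := by
      rw [hb]; field_simp; ring
    rw [h4]
    have : 0 < (mu0 + gam + lam) ^ 2 - 4 * lam * mu0 := by nlinarith [sq_nonneg (mu0 - lam), sq_nonneg gam]
    positivity
  have hR00pos : 0 < R00 := by
    rw [hR00]
    have : Real.sqrt (b ^ 2 - lam / mu0) < b := by
      rw [Real.sqrt_lt' hbpos]
      have : 0 < lam / mu0 := by positivity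
      linarith
    linarith
  have hR00lt1 : R00 < 1 := by
    rw [hR00]
    have : b - 1 < Real.sqrt (b ^ 2 - lam / mu0) := by
      apply Real.lt_sqrt_of_sq_lt
      have h2b : lam / mu0 + 1 < 2 * b := by
        have hb2 : 2 * b = (mu0 + gam + lam) / mu0 := by rw [hb]; field_simp
        have hl : lam / mu0 + 1 = (lam + mu0) / mu0 := by field_simp
        rw [hb2, hl, div_lt_div_iff₀ hmu0 hmu0]
        nlinarith
      nlinarith
    linarith
  have hdpos : 0 < lam / mu1 := by positivity
  have hdlt1 : lam / mu1 < 1 := (div_lt_one hmu1).mpr hstab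
  -- spectrum
  have hdet : ∀ x : ℝ, ((algebraMap ℝ (Matrix (Fin 2) (Fin 2) ℝ)) x - R).det
      = (x - R00) * (x - lam / mu1) := by
    intro x
    subst hR
    rw [Matrix.det_fin_two]
    simp [Matrix.algebraMap_matrix_apply]
  have hspec : spectrum ℝ R = {R00, lam / mu1} := by
    ext x
    simp only [spectrum.mem_iff, Matrix.isUnit_iff_isUnit_det, isUnit_iff_ne_zero, not_not,
      hdet, mul_eq_zero, sub_eq_zero, Set.mem_insert_iff, Set.mem_singleton_iff]
  -- the conjugated matrix
  set d : ℝ := lam / mu1 with hd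
  set c : ℝ := gam / mu1 * (R00 / (1 - R00)) with hc
  set s : ℝ := 2 * (|c| + 1) / (1 - d) with hs
  have hspos : 0 < s := by
    apply div_pos
    · positivity
    · linarith
  set D : Matrix (Fin 2) (Fin 2) ℝ := !![1, 0; 0, s] with hD
  set Di : Matrix (Fin 2) (Fin 2) ℝ := !![1, 0; 0, s⁻¹] with hDi
  set M : Matrix (Fin 2) (Fin 2) ℝ := !![R00, 0; c / s, d] with hM
  have hDDi : D * Di = 1 := by
    rw [hD, hDi, Matrix.mul_fin_two, Matrix.one_fin_two]
    norm_num [mul_inv_cancel₀ hspos.ne']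
  have hDiD : Di * D = 1 := by
    rw [hD, hDi, Matrix.mul_fin_two, Matrix.one_fin_two]
    norm_num [inv_mul_cancel₀ hspos.ne']
  have hRDMD : R = D * M * Di := by
    rw [hR, hD, hDi, hM, Matrix.mul_fin_two, Matrix.mul_fin_two]
    ext i j; fin_cases i <;> fin_cases j <;> simp <;> field_simp
  have h1d : (0:ℝ) < 1 - d := by linarith
  have hcs : |c| / s < 1 - d := by
    have hsd : (1 - d) * s = 2 * (|c| + 1) := by rw [hs]; field_simp
    rw [div_lt_iff₀ hspos, hsd]
    nlinarith [abs_nonneg c]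
  have hM1 : ‖M‖ < 1 := by
    have key : ∀ i : Fin 2, (∑ j : Fin 2, ‖M i j‖) < 1 := by
      intro i
      fin_cases i <;> simp [hM, Fin.sum_univ_two, Real.norm_eq_abs]
      · rw [abs_of_pos hR00pos]; exact hR00lt1
      · rw [abs_div, abs_of_pos hspos, abs_of_pos hdpos]
        linarith
    rw [Matrix.linfty_opNorm_def]
    rw [show (1:ℝ) = ((1:NNReal):ℝ) from rfl, NNReal.coe_lt_coe,
      Finset.sup_lt_iff (by norm_num : (⊥ : NNReal) < 1)]
    intro i _
    rw [← NNReal.coe_lt_coe]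
    push_cast
    simpa using key i
  have hSum : Summable (fun n : ℕ => M ^ n) := summable_geometric_of_norm_lt_one hM1
  have hMul : (1 - M) * ∑' n : ℕ, M ^ n = 1 := mul_neg_geom_series M hM1
  have hpow : ∀ n : ℕ, R ^ n = D * M ^ n * Di := by
    intro n
    induction n with
    | zero => simp [pow_zero, hDDi]
    | succ n ih =>
      have h1 : Di * (D * (M * Di)) = M * Di := by
        rw [← Matrix.mul_assoc, hDiD, Matrix.one_mul]
      rw [pow_succ, ih, hRDMD, pow_succ]
      simp only [Matrix.mul_assoc]
      rw [h1]
  let g : Matrix (Fin 2) (Fin 2) ℝ →+ Matrix (Fin 2) (Fin 2) ℝ :=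
    { toFun := fun x => D * x * Di
      map_zero' := by simp
      map_add' := by intro x y; rw [Matrix.mul_add, Matrix.add_mul]}
  have hgcont : Continuous fun x : Matrix (Fin 2) (Fin 2) ℝ => D * x * Di :=
    (continuous_const.matrix_mul continuous_id).matrix_mul continuous_const
  have hhs : HasSum (fun n : ℕ => R ^ n) (D * (∑' n : ℕ, M ^ n) * Di) := by
    have h := hSum.hasSum.map g hgcont
    have heq : (g ∘ fun n : ℕ => M ^ n) = fun n : ℕ => R ^ n := by
      funext n
      simp only [Function.comp, g, AddMonoidHom.coe_mk, ZeroHom.coe_mk, hpow]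
    rwa [heq] at h
  have htsum : (∑' h : ℕ, R ^ h) = D * (∑' n : ℕ, M ^ n) * Di := hhs.tsum_eq
  have h1R : (1 : Matrix (Fin 2) (Fin 2) ℝ) - R = D * (1 - M) * Di := by
    rw [Matrix.mul_sub, Matrix.sub_mul, Matrix.mul_one, hDDi, ← hRDMD]
  have hright : ((1 : Matrix (Fin 2) (Fin 2) ℝ) - R) * ∑' h : ℕ, R ^ h = 1 := by
    rw [htsum, h1R]
    calc D * (1 - M) * Di * (D * (∑' n : ℕ, M ^ n) * Di)
        = D * ((1 - M) * ((Di * D) * ((∑' n : ℕ, M ^ n) * Di))) := by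
          simp only [Matrix.mul_assoc]
      _ = D * ((1 - M) * (∑' n : ℕ, M ^ n) * Di) := by
          rw [hDiD, Matrix.one_mul, Matrix.mul_assoc (1 - M)]
      _ = 1 := by rw [hMul, Matrix.one_mul, hDDi]
  refine ⟨hspec, ⟨hR00pos, hR00lt1⟩, ⟨hdpos, hdlt1⟩, ?_, ?_⟩
  · exact (Matrix.isUnit_iff_isUnit_det _).mpr
      (IsUnit.of_mul_eq_one (∑' h : ℕ, R ^ h).det
        (by rw [← Matrix.det_mul, hright, Matrix.det_one]))
  · exact Matrix.inv_eq_right_inv hright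


end Aux

/-- the eigenvalues of R are exactly R00 and λ/μ1, both in (0,1),
I − R is invertible, and (I − R)⁻¹ = Σ_{h=0}^∞ R^h. -/
theorem statement10 (lam mu0 mu1 gam : ℝ)
    (hlam : 0 < lam) (hmu0 : 0 < mu0) (hmu1 : 0 < mu1) (hgam : 0 < gam)
    (hstab : lam < mu1)
    (R00 : ℝ)
    (hR00 : R00 = (mu0 + gam + lam) / (2 * mu0) -
      Real.sqrt (((mu0 + gam + lam) / (2 * mu0)) ^ 2 - lam / mu0))
    (R : Matrix (Fin 2) (Fin 2) ℝ)
    (hR : R = !![R00, 0; gam / mu1 * (R00 / (1 - R00)), lam / mu1]) :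
    spectrum ℝ R = {R00, lam / mu1} ∧
    (0 < R00 ∧ R00 < 1) ∧
    (0 < lam / mu1 ∧ lam / mu1 < 1) ∧
    IsUnit ((1 : Matrix (Fin 2) (Fin 2) ℝ) - R) ∧
    ((1 : Matrix (Fin 2) (Fin 2) ℝ) - R)⁻¹ = ∑' h : ℕ, R ^ h :=
  statement10_aux lam mu0 mu1 gam hlam hmu0 hmu1 hgam hstab R00 hR00 R hR
end

section
/- Let Z, A, B, T1, T2 be d×d complex matrices such that every eigenvalue of Z has modulus at most 1, every eigenvalue of B has modulus strictly less than 1, T1 and T2 are invertible, and every eigenvalue of T1 has modulus strictly less than 1. Then Σ_{h=0}^∞ S(T2·T1^h·Z·T1^{−h}·T2^{−1}, A, B) · T2·T1^h·Z^h = S(Z, A·T2·S(Z, I, T1), B), where all the series involved converge. -/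
open scoped ENNReal

attribute [local instance] Matrix.linftyOpNormedRing Matrix.linftyOpNormedAlgebra

section Aux

variable {𝔸 : Type*} [NormedRing 𝔸] [NormedAlgebra ℂ 𝔸] [CompleteSpace 𝔸]

/-- If the spectral radius is `< r`, then `‖a ^ n‖ ≤ C * r ^ n` for some `C > 0`. -/
lemma aux_exists_pow_norm_le (a : 𝔸) {r : ℝ} (hr : 0 < r)
    (h : spectralRadius ℂ a < ENNReal.ofReal r) :
    ∃ C : ℝ, 0 < C ∧ ∀ n : ℕ, ‖a ^ n‖ ≤ C * r ^ n := by
  have htt := spectrum.pow_norm_pow_one_div_tendsto_nhds_spectralRadius a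
  have hev := htt.eventually_lt_const h
  rw [Filter.eventually_atTop] at hev
  obtain ⟨N, hN⟩ := hev
  have key : ∀ n : ℕ, N ≤ n → 1 ≤ n → ‖a ^ n‖ ≤ r ^ n := by
    intro n h1 h2
    have hn : (0:ℝ) < n := by exact_mod_cast h2
    have h3 : ‖a ^ n‖ ^ (1 / (n:ℝ)) < r :=
      (ENNReal.ofReal_lt_ofReal_iff hr).mp (hN n h1)
    have h4 : (‖a ^ n‖ ^ (1 / (n:ℝ))) ^ (n:ℝ) < r ^ (n:ℝ) :=
      Real.rpow_lt_rpow (Real.rpow_nonneg (norm_nonneg _) _) h3 hn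
    have h5 : (‖a ^ n‖ ^ (1 / (n:ℝ))) ^ (n:ℝ) = ‖a ^ n‖ := by
      rw [← Real.rpow_mul (norm_nonneg _), one_div_mul_cancel (ne_of_gt hn), Real.rpow_one]
    rw [h5] at h4
    calc ‖a ^ n‖ ≤ r ^ (n:ℝ) := h4.le
      _ = r ^ n := by rw [Real.rpow_natCast]
  refine ⟨1 + ∑ i ∈ Finset.range (N + 1), ‖a ^ i‖ / r ^ i, by positivity, fun n => ?_⟩
  rcases le_or_gt n N with hn | hn
  · have h1 : ‖a ^ n‖ / r ^ n ≤ ∑ i ∈ Finset.range (N + 1), ‖a ^ i‖ / r ^ i :=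
      Finset.single_le_sum (f := fun i => ‖a ^ i‖ / r ^ i)
        (fun i _ => by positivity) (Finset.mem_range.mpr (Nat.lt_succ_of_le hn))
    have h2 : ‖a ^ n‖ / r ^ n ≤ 1 + ∑ i ∈ Finset.range (N + 1), ‖a ^ i‖ / r ^ i := by
      linarith
    calc ‖a ^ n‖ = ‖a ^ n‖ / r ^ n * r ^ n := by field_simp
      _ ≤ _ := mul_le_mul_of_nonneg_right h2 (by positivity)
  · have h1 : ‖a ^ n‖ ≤ r ^ n := key n (le_of_lt hn) (le_trans (Nat.one_le_iff_ne_zero.mpr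
      (by omega)) le_rfl)
    have h2 : (0:ℝ) ≤ ∑ i ∈ Finset.range (N + 1), ‖a ^ i‖ / r ^ i :=
      Finset.sum_nonneg fun i _ => by positivity
    nlinarith [pow_pos hr n]

lemma aux_radius_lt_one (a : 𝔸) (h : ∀ z ∈ spectrum ℂ a, ‖z‖ < 1) :
    spectralRadius ℂ a < 1 := by
  rcases Set.eq_empty_or_nonempty (spectrum ℂ a) with he | hne
  · rw [spectralRadius]
    simp [he]
  · obtain ⟨k, hk, hkeq⟩ := spectrum.exists_nnnorm_eq_spectralRadius_of_nonempty hne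
    rw [← hkeq]
    exact_mod_cast (by simpa [← NNReal.coe_lt_coe] using h k hk : ‖k‖₊ < 1)

lemma aux_radius_le_one (a : 𝔸) (h : ∀ z ∈ spectrum ℂ a, ‖z‖ ≤ 1) :
    spectralRadius ℂ a ≤ 1 := by
  rw [spectralRadius]
  refine iSup₂_le fun z hz => ?_
  exact_mod_cast (by simpa [← NNReal.coe_le_coe] using h z hz : ‖z‖₊ ≤ 1)

lemma aux_exists_between (a : 𝔸) (h : spectralRadius ℂ a < 1) :
    ∃ u : ℝ, 0 < u ∧ u < 1 ∧ spectralRadius ℂ a < ENNReal.ofReal u := by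
  obtain ⟨x, hx1, hx2⟩ := exists_between h
  have hxt : x ≠ ⊤ := ne_top_of_lt hx2
  have hx0 : x ≠ 0 := by
    intro h0
    exact absurd (h0 ▸ hx1) (by simp)
  refine ⟨x.toReal, ENNReal.toReal_pos hx0 hxt, ?_, ?_⟩
  · have := (ENNReal.toReal_lt_toReal hxt (by simp)).mpr hx2
    simpa using this
  · rwa [ENNReal.ofReal_toReal hxt]

end Aux

set_option maxHeartbeats 1600000 in
/-- Lemma 3.2: the summation identity
Σ_h S(T2·T1^h·Z·T1^{−h}·T2^{−1}, A, B)·T2·T1^h·Z^h = S(Z, A·T2·S(Z,I,T1), B),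
where all series involved converge and S(Z,A,B) = Σ_h B^h·A·Z^h. -/
theorem statement12 (d : ℕ) (Z A B T1 T2 : Matrix (Fin d) (Fin d) ℂ)
    (hZ : ∀ z ∈ spectrum ℂ Z, ‖z‖ ≤ 1)
    (hB : ∀ z ∈ spectrum ℂ B, ‖z‖ < 1)
    (hT1 : IsUnit T1) (hT2 : IsUnit T2)
    (hT1e : ∀ z ∈ spectrum ℂ T1, ‖z‖ < 1) :
    (∀ h : ℕ, Summable (fun k : ℕ =>
      B ^ k * A * (T2 * T1 ^ h * Z * (T1⁻¹) ^ h * T2⁻¹) ^ k)) ∧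
    Summable (fun h : ℕ => T1 ^ h * (1 : Matrix (Fin d) (Fin d) ℂ) * Z ^ h) ∧
    Summable (fun h : ℕ =>
      (∑' k : ℕ, B ^ k * A * (T2 * T1 ^ h * Z * (T1⁻¹) ^ h * T2⁻¹) ^ k) *
        (T2 * T1 ^ h * Z ^ h)) ∧
    Summable (fun h : ℕ =>
      B ^ h * (A * T2 * ∑' k : ℕ, T1 ^ k * (1 : Matrix (Fin d) (Fin d) ℂ) * Z ^ k) * Z ^ h) ∧
    (∑' h : ℕ,
      (∑' k : ℕ, B ^ k * A * (T2 * T1 ^ h * Z * (T1⁻¹) ^ h * T2⁻¹) ^ k) *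
        (T2 * T1 ^ h * Z ^ h)) =
      ∑' h : ℕ,
        B ^ h * (A * T2 * ∑' k : ℕ, T1 ^ k * (1 : Matrix (Fin d) (Fin d) ℂ) * Z ^ k) * Z ^ h := by
  classical
  -- choose geometric rates
  obtain ⟨u, hu0, hu1, hBu⟩ := aux_exists_between B (aux_radius_lt_one B hB)
  obtain ⟨v, hv0, hv1, hTv⟩ := aux_exists_between T1 (aux_radius_lt_one T1 hT1e)
  set w : ℝ := (1 + min u⁻¹ v⁻¹) / 2 with hw
  have hm1 : 1 < min u⁻¹ v⁻¹ := lt_min ((one_lt_inv₀ hu0).mpr hu1) ((one_lt_inv₀ hv0).mpr hv1)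
  have hw1 : 1 < w := by rw [hw]; linarith
  have hw0 : 0 < w := lt_trans one_pos hw1
  have hwu : w < u⁻¹ := by
    have := min_le_left u⁻¹ v⁻¹; rw [hw]; linarith
  have hwv : w < v⁻¹ := by
    have := min_le_right u⁻¹ v⁻¹; rw [hw]; linarith
  have huw : u * w < 1 := by
    calc u * w < u * u⁻¹ := by exact mul_lt_mul_of_pos_left hwu hu0
      _ = 1 := mul_inv_cancel₀ (ne_of_gt hu0)
  have hvw : v * w < 1 := by
    calc v * w < v * v⁻¹ := by exact mul_lt_mul_of_pos_left hwv hv0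
      _ = 1 := mul_inv_cancel₀ (ne_of_gt hv0)
  have huw0 : 0 ≤ u * w := by positivity
  have hvw0 : 0 ≤ v * w := by positivity
  have hZw : spectralRadius ℂ Z < ENNReal.ofReal w := by
    refine lt_of_le_of_lt (aux_radius_le_one Z hZ) ?_
    rw [show (1 : ℝ≥0∞) = ENNReal.ofReal 1 by simp]
    exact (ENNReal.ofReal_lt_ofReal_iff hw0).mpr hw1
  obtain ⟨CB, hCB0, hCBn⟩ := aux_exists_pow_norm_le B hu0 hBu
  obtain ⟨CT, hCT0, hCTn⟩ := aux_exists_pow_norm_le T1 hv0 hTv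
  obtain ⟨CZ, hCZ0, hCZn⟩ := aux_exists_pow_norm_le Z hw0 hZw
  have geo_uw : Summable (fun k : ℕ => (u * w) ^ k) := summable_geometric_of_lt_one huw0 huw
  have geo_vw : Summable (fun h : ℕ => (v * w) ^ h) := summable_geometric_of_lt_one hvw0 hvw
  -- basic norm bound for triple products
  have nb : ∀ X Y W : Matrix (Fin d) (Fin d) ℂ, ‖X * Y * W‖ ≤ ‖X‖ * ‖Y‖ * ‖W‖ := fun X Y W =>
    (norm_mul_le (X * Y) W).trans (mul_le_mul_of_nonneg_right (norm_mul_le X Y) (norm_nonneg W))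
  -- key summability: `fun k => B ^ k * C * Z ^ k`
  have keyBZ : ∀ C : Matrix (Fin d) (Fin d) ℂ, Summable (fun k : ℕ => B ^ k * C * Z ^ k) := by
    intro C
    refine Summable.of_norm_bounded (g := fun k => CB * ‖C‖ * CZ * (u * w) ^ k)
      (geo_uw.mul_left _) fun k => ?_
    calc ‖B ^ k * C * Z ^ k‖ ≤ ‖B ^ k‖ * ‖C‖ * ‖Z ^ k‖ := nb _ _ _
      _ ≤ CB * u ^ k * ‖C‖ * (CZ * w ^ k) := by
          have h1 := hCBn k
          have h2 := hCZn k
          have h3 : (0:ℝ) ≤ ‖C‖ := norm_nonneg _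
          have h4 : (0:ℝ) ≤ ‖Z ^ k‖ := norm_nonneg _
          have hb : (0:ℝ) ≤ CB * u ^ k := mul_nonneg hCB0.le (pow_nonneg hu0.le k)
          exact mul_le_mul (mul_le_mul_of_nonneg_right h1 h3) h2 h4
            (mul_nonneg hb h3)
      _ = CB * ‖C‖ * CZ * (u * w) ^ k := by rw [mul_pow]; ring
  have keyTZ : ∀ C : Matrix (Fin d) (Fin d) ℂ, Summable (fun k : ℕ => T1 ^ k * C * Z ^ k) := by
    intro C
    refine Summable.of_norm_bounded (g := fun k => CT * ‖C‖ * CZ * (v * w) ^ k)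
      (geo_vw.mul_left _) fun k => ?_
    calc ‖T1 ^ k * C * Z ^ k‖ ≤ ‖T1 ^ k‖ * ‖C‖ * ‖Z ^ k‖ := nb _ _ _
      _ ≤ CT * v ^ k * ‖C‖ * (CZ * w ^ k) := by
          have h1 := hCTn k
          have h2 := hCZn k
          have h3 : (0:ℝ) ≤ ‖C‖ := norm_nonneg _
          have h4 : (0:ℝ) ≤ ‖Z ^ k‖ := norm_nonneg _
          have hb : (0:ℝ) ≤ CT * v ^ k := mul_nonneg hCT0.le (pow_nonneg hv0.le k)
          exact mul_le_mul (mul_le_mul_of_nonneg_right h1 h3) h2 h4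
            (mul_nonneg hb h3)
      _ = CT * ‖C‖ * CZ * (v * w) ^ k := by rw [mul_pow]; ring
  -- invertibility facts
  have hT1d : IsUnit T1.det := (Matrix.isUnit_iff_isUnit_det T1).mp hT1
  have hT2d : IsUnit T2.det := (Matrix.isUnit_iff_isUnit_det T2).mp hT2
  have hc1 : ∀ Y : Matrix (Fin d) (Fin d) ℂ, T2⁻¹ * (T2 * Y) = Y := fun Y => by
    rw [← mul_assoc, Matrix.nonsing_inv_mul T2 hT2d, one_mul]
  have hc2 : ∀ (h : ℕ) (Y : Matrix (Fin d) (Fin d) ℂ), (T1⁻¹) ^ h * (T1 ^ h * Y) = Y := by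
    intro h Y
    rw [Matrix.inv_pow', ← mul_assoc,
      Matrix.nonsing_inv_mul (T1 ^ h) ((Matrix.isUnit_iff_isUnit_det _).mp (hT1.pow h)), one_mul]
  -- conjugation powers
  have hWpow : ∀ (h k : ℕ), (T2 * T1 ^ h * Z * (T1⁻¹) ^ h * T2⁻¹) ^ k =
      T2 * T1 ^ h * Z ^ k * (T1⁻¹) ^ h * T2⁻¹ := by
    intro h k
    have hU : IsUnit (T2 * T1 ^ h) := hT2.mul (hT1.pow h)
    have hinv : (T1⁻¹) ^ h * T2⁻¹ = (T2 * T1 ^ h)⁻¹ := by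
      rw [Matrix.inv_pow', Matrix.mul_inv_rev]
    have conj := Units.conj_pow hU.unit Z k
    have hcoe : (↑hU.unit : Matrix (Fin d) (Fin d) ℂ) = T2 * T1 ^ h := hU.unit_spec
    have hcoeinv : (↑hU.unit⁻¹ : Matrix (Fin d) (Fin d) ℂ) = (T2 * T1 ^ h)⁻¹ := by
      rw [Matrix.coe_units_inv, hcoe]
    rw [hcoe, hcoeinv] at conj
    calc (T2 * T1 ^ h * Z * (T1⁻¹) ^ h * T2⁻¹) ^ k
        = (T2 * T1 ^ h * Z * ((T1⁻¹) ^ h * T2⁻¹)) ^ k := by rw [mul_assoc (T2 * T1 ^ h * Z)]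
      _ = (T2 * T1 ^ h * Z * (T2 * T1 ^ h)⁻¹) ^ k := by rw [hinv]
      _ = T2 * T1 ^ h * Z ^ k * (T2 * T1 ^ h)⁻¹ := conj
      _ = T2 * T1 ^ h * Z ^ k * ((T1⁻¹) ^ h * T2⁻¹) := by rw [hinv]
      _ = T2 * T1 ^ h * Z ^ k * (T1⁻¹) ^ h * T2⁻¹ := by rw [mul_assoc (T2 * T1 ^ h * Z ^ k)]
  -- Part 1
  have part1 : ∀ h : ℕ, Summable (fun k : ℕ =>
      B ^ k * A * (T2 * T1 ^ h * Z * (T1⁻¹) ^ h * T2⁻¹) ^ k) := by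
    intro h
    have base : Summable (fun k : ℕ => B ^ k * (A * (T2 * T1 ^ h)) * Z ^ k *
        ((T1⁻¹) ^ h * T2⁻¹)) := (keyBZ (A * (T2 * T1 ^ h))).mul_right _
    refine base.congr fun k => ?_
    rw [hWpow]
    simp only [mul_assoc]
  -- Part 2
  have part2 : Summable (fun h : ℕ => T1 ^ h * (1 : Matrix (Fin d) (Fin d) ℂ) * Z ^ h) := keyTZ 1
  -- the double-indexed family
  set g : ℕ → ℕ → Matrix (Fin d) (Fin d) ℂ :=
    fun i j => B ^ j * (A * T2 * T1 ^ i) * Z ^ (i + j) with hg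
  set K : ℝ := CB * (‖A * T2‖ * CT) * CZ with hK
  have hK0 : 0 < K ∨ 0 ≤ K := Or.inr (by positivity)
  have hgle : ∀ i j, ‖g i j‖ ≤ K * ((v * w) ^ i * (u * w) ^ j) := by
    intro i j
    have h2 : ‖A * T2 * T1 ^ i‖ ≤ ‖A * T2‖ * (CT * v ^ i) :=
      (norm_mul_le _ _).trans (mul_le_mul_of_nonneg_left (hCTn i) (norm_nonneg _))
    calc ‖g i j‖ ≤ ‖B ^ j‖ * ‖A * T2 * T1 ^ i‖ * ‖Z ^ (i + j)‖ := nb _ _ _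
      _ ≤ (CB * u ^ j) * (‖A * T2‖ * (CT * v ^ i)) * (CZ * (w ^ i * w ^ j)) := by
          have h1 := hCBn j
          have h3 : ‖Z ^ (i + j)‖ ≤ CZ * (w ^ i * w ^ j) := by
            rw [← pow_add w]; exact hCZn (i + j)
          have h4 : (0:ℝ) ≤ ‖B ^ j‖ := norm_nonneg _
          have h5 : (0:ℝ) ≤ ‖A * T2 * T1 ^ i‖ := norm_nonneg _
          have h6 : (0:ℝ) ≤ ‖Z ^ (i + j)‖ := norm_nonneg _
          have h7 : (0:ℝ) ≤ ‖A * T2‖ := norm_nonneg _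
          have hb1 : (0:ℝ) ≤ CB * u ^ j := mul_nonneg hCB0.le (pow_nonneg hu0.le j)
          have hb2 : (0:ℝ) ≤ ‖A * T2‖ * (CT * v ^ i) :=
            mul_nonneg h7 (mul_nonneg hCT0.le (pow_nonneg hv0.le i))
          exact mul_le_mul (mul_le_mul h1 h2 h5 hb1) h3 h6 (mul_nonneg hb1 hb2)
      _ = K * ((v * w) ^ i * (u * w) ^ j) := by rw [hK, mul_pow, mul_pow]; ring
  -- summability of g in each variable and jointly
  have hgs1 : ∀ i, Summable (fun j => g i j) := by
    intro i
    refine Summable.of_norm_bounded (g := fun j => (K * (v * w) ^ i) * (u * w) ^ j)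
      (geo_uw.mul_left _) fun j => ?_
    calc ‖g i j‖ ≤ K * ((v * w) ^ i * (u * w) ^ j) := hgle i j
      _ = (K * (v * w) ^ i) * (u * w) ^ j := by ring
  have hgs2 : ∀ j, Summable (fun i => g i j) := by
    intro j
    refine Summable.of_norm_bounded (g := fun i => (K * (u * w) ^ j) * (v * w) ^ i)
      (geo_vw.mul_left _) fun i => ?_
    calc ‖g i j‖ ≤ K * ((v * w) ^ i * (u * w) ^ j) := hgle i j
      _ = (K * (u * w) ^ j) * (v * w) ^ i := by ring
  have hG : Summable (fun p : ℕ × ℕ => g p.1 p.2) := by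
    refine Summable.of_norm_bounded (g := fun p => K * ((v * w) ^ p.1 * (u * w) ^ p.2))
      (((geo_vw.mul_of_nonneg geo_uw (fun i => pow_nonneg hvw0 i)
        (fun j => pow_nonneg huw0 j))).mul_left K) fun p => hgle p.1 p.2
  -- rewriting the LHS summand
  have hLHS : ∀ h : ℕ,
      (∑' k : ℕ, B ^ k * A * (T2 * T1 ^ h * Z * (T1⁻¹) ^ h * T2⁻¹) ^ k) *
        (T2 * T1 ^ h * Z ^ h) = ∑' k : ℕ, g h k := by
    intro h
    rw [← (part1 h).tsum_mul_right]
    refine tsum_congr fun k => ?_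
    rw [hWpow, hg]
    simp only [pow_add, mul_assoc, hc1, hc2]
    rw [pow_mul_comm Z k h]
  -- rewriting the RHS summand
  have hS : Summable (fun k : ℕ => T1 ^ k * (1 : Matrix (Fin d) (Fin d) ℂ) * Z ^ k) := part2
  have hRHS : ∀ h : ℕ,
      B ^ h * (A * T2 * ∑' k : ℕ, T1 ^ k * (1 : Matrix (Fin d) (Fin d) ℂ) * Z ^ k) * Z ^ h =
        ∑' k : ℕ, g k h := by
    intro h
    have e1 : A * T2 * ∑' k : ℕ, T1 ^ k * (1 : Matrix (Fin d) (Fin d) ℂ) * Z ^ k =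
        ∑' k : ℕ, A * T2 * (T1 ^ k * (1 : Matrix (Fin d) (Fin d) ℂ) * Z ^ k) :=
      (hS.tsum_mul_left (A * T2)).symm
    have hS2 : Summable (fun k : ℕ =>
        A * T2 * (T1 ^ k * (1 : Matrix (Fin d) (Fin d) ℂ) * Z ^ k)) := hS.mul_left _
    have e2 : B ^ h * ∑' k : ℕ, A * T2 * (T1 ^ k * (1 : Matrix (Fin d) (Fin d) ℂ) * Z ^ k) =
        ∑' k : ℕ, B ^ h * (A * T2 * (T1 ^ k * (1 : Matrix (Fin d) (Fin d) ℂ) * Z ^ k)) :=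
      (hS2.tsum_mul_left (B ^ h)).symm
    have hS3 : Summable (fun k : ℕ =>
        B ^ h * (A * T2 * (T1 ^ k * (1 : Matrix (Fin d) (Fin d) ℂ) * Z ^ k))) := hS2.mul_left _
    rw [e1, e2, ← hS3.tsum_mul_right]
    refine tsum_congr fun k => ?_
    rw [hg]
    simp only [mul_one, pow_add, mul_assoc]
  -- Part 3
  have part3' : Summable (fun h : ℕ => ∑' k : ℕ, g h k) := by
    set T : ℝ := ∑' k : ℕ, (u * w) ^ k with hT
    have hT0 : 0 ≤ T := tsum_nonneg fun k => pow_nonneg huw0 k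
    refine Summable.of_norm_bounded (g := fun h => (K * T) * (v * w) ^ h)
      (geo_vw.mul_left _) fun h => ?_
    have hnorms : Summable (fun k => ‖g h k‖) := by
      refine Summable.of_nonneg_of_le (fun k => norm_nonneg _)
        (fun k => (hgle h k).trans_eq (by ring)) (geo_uw.mul_left (K * (v * w) ^ h))
    calc ‖∑' k : ℕ, g h k‖ ≤ ∑' k : ℕ, ‖g h k‖ := norm_tsum_le_tsum_norm hnorms
      _ ≤ ∑' k : ℕ, (K * (v * w) ^ h) * (u * w) ^ k := by
          refine Summable.tsum_le_tsum (fun k => (hgle h k).trans_eq (by ring)) hnorms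
            (geo_uw.mul_left _)
      _ = (K * (v * w) ^ h) * T := by rw [hT, tsum_mul_left]
      _ = (K * T) * (v * w) ^ h := by ring
  have part3 : Summable (fun h : ℕ =>
      (∑' k : ℕ, B ^ k * A * (T2 * T1 ^ h * Z * (T1⁻¹) ^ h * T2⁻¹) ^ k) *
        (T2 * T1 ^ h * Z ^ h)) := part3'.congr fun h => (hLHS h).symm
  -- Part 4
  have part4 : Summable (fun h : ℕ =>
      B ^ h * (A * T2 * ∑' k : ℕ, T1 ^ k * (1 : Matrix (Fin d) (Fin d) ℂ) * Z ^ k) * Z ^ h) :=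
    keyBZ _
  -- Part 5: Fubini
  have hG' : Summable (fun p : ℕ × ℕ => g p.2 p.1) :=
    (Equiv.prodComm ℕ ℕ).summable_iff.mpr hG
  have e1 : ∑' p : ℕ × ℕ, g p.1 p.2 = ∑' (i : ℕ) (j : ℕ), g i j := Summable.tsum_prod' hG fun i => hgs1 i
  have e2 : ∑' p : ℕ × ℕ, g p.2 p.1 = ∑' (j : ℕ) (i : ℕ), g i j := Summable.tsum_prod' hG' fun j => hgs2 j
  have e3 : ∑' p : ℕ × ℕ, g p.2 p.1 = ∑' p : ℕ × ℕ, g p.1 p.2 :=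
    (Equiv.prodComm ℕ ℕ).tsum_eq (fun p : ℕ × ℕ => g p.1 p.2)
  have part5 : (∑' h : ℕ,
      (∑' k : ℕ, B ^ k * A * (T2 * T1 ^ h * Z * (T1⁻¹) ^ h * T2⁻¹) ^ k) *
        (T2 * T1 ^ h * Z ^ h)) =
      ∑' h : ℕ,
        B ^ h * (A * T2 * ∑' k : ℕ, T1 ^ k * (1 : Matrix (Fin d) (Fin d) ℂ) * Z ^ k) * Z ^ h := by
    calc (∑' h : ℕ,
        (∑' k : ℕ, B ^ k * A * (T2 * T1 ^ h * Z * (T1⁻¹) ^ h * T2⁻¹) ^ k) *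
          (T2 * T1 ^ h * Z ^ h))
        = ∑' (i : ℕ) (j : ℕ), g i j := tsum_congr fun h => hLHS h
      _ = ∑' p : ℕ × ℕ, g p.1 p.2 := e1.symm
      _ = ∑' p : ℕ × ℕ, g p.2 p.1 := e3.symm
      _ = ∑' (j : ℕ) (i : ℕ), g i j := e2
      _ = ∑' h : ℕ,
          B ^ h * (A * T2 * ∑' k : ℕ, T1 ^ k * (1 : Matrix (Fin d) (Fin d) ℂ) * Z ^ k) * Z ^ h :=
          tsum_congr fun h => (hRHS h).symm
  exact ⟨part1, part2, part3, part4, part5⟩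
end

section
/- The matrix H(s) − Γ1 − Λ is invertible. Moreover, let ψ : ℕ → ℕ → ℝ^{1×2} satisfy: ψ(0,m) = e for all m; for all n ≥ 1 and m ≥ K, ψ(n,m)·(H(s)−Γ1) = ψ(n−1,m)·M + ψ(n,m+1)·Λ; and ψ(n,m+1) = ψ(n,m) for all n ≥ 1 and m ≥ K. Then ψ(n,m) = e·T(s)^n for all n ≥ 0 and m ≥ K, where T(s) = M·(H(s)−Γ1−Λ)^{−1}. -/
noncomputable section

def Lm (lam : ℝ) : Matrix (Fin 2) (Fin 2) ℝ := !![lam, 0; 0, lam]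

def Mm (mu0 mu1 : ℝ) : Matrix (Fin 2) (Fin 2) ℝ := !![mu0, 0; 0, mu1]

def G1m (gam : ℝ) : Matrix (Fin 2) (Fin 2) ℝ := !![0, 0; gam, gam]

def Hm (lam mu0 mu1 gam s : ℝ) : Matrix (Fin 2) (Fin 2) ℝ :=
  (gam + s) • (1 : Matrix (Fin 2) (Fin 2) ℝ) + Lm lam + Mm mu0 mu1

def Tm (lam mu0 mu1 gam s : ℝ) : Matrix (Fin 2) (Fin 2) ℝ :=
  Mm mu0 mu1 * (Hm lam mu0 mu1 gam s - G1m gam - Lm lam)⁻¹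

def eRow : Matrix (Fin 1) (Fin 2) ℝ := !![1, 1]

end

/-- H(s) − Γ1 − Λ is invertible and above the threshold
ψ(n,m) = e·T(s)^n, where T(s) = M·(H(s) − Γ1 − Λ)⁻¹. -/
theorem statement14 (lam mu0 mu1 gam s : ℝ) (K : ℕ)
    (hlam : 0 < lam) (hmu0 : 0 < mu0) (hmu1 : 0 < mu1) (hgam : 0 < gam) (hs : 0 < s)
    (hK : 1 ≤ K) :
    IsUnit (Hm lam mu0 mu1 gam s - G1m gam - Lm lam) ∧
    ∀ ψ : ℕ → ℕ → Matrix (Fin 1) (Fin 2) ℝ,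
      (∀ m, ψ 0 m = eRow) →
      (∀ n m, 1 ≤ n → K ≤ m →
        ψ n m * (Hm lam mu0 mu1 gam s - G1m gam) =
          ψ (n - 1) m * Mm mu0 mu1 + ψ n (m + 1) * Lm lam) →
      (∀ n m, 1 ≤ n → K ≤ m → ψ n (m + 1) = ψ n m) →
      ∀ n m, K ≤ m → ψ n m = eRow * (Tm lam mu0 mu1 gam s) ^ n := by
  set A := Hm lam mu0 mu1 gam s - G1m gam - Lm lam with hA
  have hdet : A.det ≠ 0 := by
    have : A.det = (gam + s + mu0) * (s + mu1) := by
      simp [hA, Hm, G1m, Lm, Mm, Matrix.det_fin_two, Matrix.smul_apply,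
        Matrix.one_apply]
      ring
    rw [this]
    positivity
  have hU : IsUnit A := by
    rw [Matrix.isUnit_iff_isUnit_det]
    exact isUnit_iff_ne_zero.mpr hdet
  refine ⟨hU, ?_⟩
  intro ψ h0 hrec hshift n
  induction n with
  | zero => intro m hm; simp [h0 m]
  | succ n ih =>
    intro m hm
    have hn1 : 1 ≤ n + 1 := Nat.le_add_left 1 n
    have h1 := hrec (n + 1) m hn1 hm
    rw [hshift (n + 1) m hn1 hm] at h1
    have h2 : ψ (n + 1) m * A = ψ n m * Mm mu0 mu1 := by
      simp only [hA, Matrix.mul_sub, h1, Nat.add_sub_cancel] at *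
      abel
    have hinv : A * A⁻¹ = 1 := Matrix.mul_nonsing_inv A (isUnit_iff_ne_zero.mpr hdet)
    have h3 : ψ (n + 1) m = ψ n m * Mm mu0 mu1 * A⁻¹ := by
      calc ψ (n + 1) m = ψ (n + 1) m * A * A⁻¹ := by
            rw [Matrix.mul_assoc, hinv, Matrix.mul_one]
        _ = ψ n m * Mm mu0 mu1 * A⁻¹ := by rw [h2]
    rw [h3, ih m hm]
    rw [Tm, ← hA]
    rw [pow_succ]
    rw [Matrix.mul_assoc, Matrix.mul_assoc]
end

section
/- Let ψ be a solution of the vector sojourn-time recursion, and let Z be a 2×2 real matrix whose eigenvalues all have modulus strictly less than 1, with T_M(s) and T_Λ(s) invertible. Then for every m ≥ 0, φ(Z,m) = ψ(K,m)·T_M(s) + φ(T_M(s)·Z·T_M(s)^{−1}, m)·T_M(s)·Z + φ(T_Λ(s)·Z·T_Λ(s)^{−1}, m+1)·T_Λ(s), where all three matrix generating functions converge. -/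
noncomputable section

def G0m (gam : ℝ) : Matrix (Fin 2) (Fin 2) ℝ := !![gam, gam; 0, 0]

def TLm (lam mu0 mu1 gam s : ℝ) : Matrix (Fin 2) (Fin 2) ℝ :=
  Lm lam * (Hm lam mu0 mu1 gam s - G1m gam)⁻¹

def TMm (lam mu0 mu1 gam s : ℝ) : Matrix (Fin 2) (Fin 2) ℝ :=
  Mm mu0 mu1 * (Hm lam mu0 mu1 gam s - G1m gam)⁻¹

/-- The eigenvalues (over ℂ) of a real 2×2 matrix all have modulus strictly less than 1. -/
def SpecLtOne (Z : Matrix (Fin 2) (Fin 2) ℝ) : Prop :=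
  ∀ z ∈ spectrum ℂ (Z.map fun x : ℝ => (x : ℂ)), ‖z‖ < 1

/-- `ψ` is a solution of the vector sojourn-time recursion. -/
def IsVecSol (lam mu0 mu1 gam s : ℝ) (K : ℕ)
    (ψ : ℕ → ℕ → Matrix (Fin 1) (Fin 2) ℝ) : Prop :=
  (∀ m, ψ 0 m = eRow) ∧
  (∀ n m, 1 ≤ n →
    ψ n m * (Hm lam mu0 mu1 gam s - (if K < n + m then G1m gam else G0m gam)) =
      ψ (n - 1) m * Mm mu0 mu1 + ψ n (m + 1) * Lm lam) ∧
  (∀ n m, K ≤ m → ψ n m = eRow * (Tm lam mu0 mu1 gam s) ^ n) ∧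
  (∀ n m i j, 0 ≤ ψ n m i j ∧ ψ n m i j ≤ 1)

end

/- ### Auxiliary lemmas -/

section NormsAux

attribute [local instance] Matrix.linftyOpNormedAddCommGroup Matrix.linftyOpNormedRing
  Matrix.linftyOpNormedAlgebra

/-- From the spectral condition we get a summable sequence dominating all entries of powers. -/
lemma specLtOne_bound (Z : Matrix (Fin 2) (Fin 2) ℝ) (hZ : SpecLtOne Z) :
    ∃ c : ℕ → ℝ, (∀ h, 0 ≤ c h) ∧ Summable c ∧
      ∀ (h : ℕ) (i j : Fin 2), |(Z ^ h) i j| ≤ c h := by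
  set W : Matrix (Fin 2) (Fin 2) ℂ := Z.map (fun x : ℝ => (x : ℂ)) with hW
  have hρ : spectralRadius ℂ W < 1 := by
    have h := spectrum.spectralRadius_lt_of_forall_lt (a := W) (r := 1)
      (fun z hz => by simpa [← NNReal.coe_lt_coe] using hZ z hz)
    simpa using h
  obtain ⟨r', hρr', hr1⟩ := exists_between hρ
  have hr'top : r' ≠ ⊤ := (hr1.trans_le le_top).ne
  set rn : NNReal := r'.toNNReal with hrn
  have hrn1 : rn < 1 := by
    rw [hrn, ← ENNReal.coe_lt_coe, ENNReal.coe_toNNReal hr'top]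
    simpa using hr1
  have htends := spectrum.pow_nnnorm_pow_one_div_tendsto_nhds_spectralRadius W
  have hev : ∀ᶠ (n : ℕ) in Filter.atTop,
      ((‖W ^ n‖₊ : ENNReal)) ^ (1 / (n : ℝ)) < r' := htends.eventually_lt_const hρr'
  obtain ⟨N, hN⟩ := Filter.eventually_atTop.mp hev
  have key : ∀ n, max N 1 ≤ n → ‖W ^ n‖₊ ≤ rn ^ n := by
    intro n hn
    have hn1 : 1 ≤ n := le_trans (le_max_right _ _) hn
    have hnn : (n : ℝ) ≠ 0 := Nat.cast_ne_zero.mpr (by omega)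
    have h1 := hN n (le_trans (le_max_left _ _) hn)
    have h2 : ((‖W ^ n‖₊ : ENNReal)) ≤ r' ^ (n : ℝ) := by
      have := ENNReal.rpow_le_rpow h1.le (Nat.cast_nonneg n)
      rwa [← ENNReal.rpow_mul, one_div, inv_mul_cancel₀ hnn, ENNReal.rpow_one] at this
    rw [← ENNReal.coe_toNNReal hr'top, ← ENNReal.coe_rpow_of_nonneg _ (Nat.cast_nonneg n),
      ENNReal.coe_le_coe, ← hrn] at h2
    calc ‖W ^ n‖₊ ≤ rn ^ (n : ℝ) := h2
    _ = rn ^ n := by rw [NNReal.rpow_natCast]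
  refine ⟨fun h => ‖W ^ h‖, fun h => norm_nonneg _, ?_, ?_⟩
  · apply Summable.of_norm_bounded_eventually_nat (g := fun n => (rn : ℝ) ^ n)
      (summable_geometric_of_lt_one rn.coe_nonneg (by exact_mod_cast hrn1))
    filter_upwards [Filter.eventually_atTop.mpr ⟨max N 1, key⟩] with n hn
    rw [Real.norm_eq_abs, abs_of_nonneg (norm_nonneg _)]
    calc ‖W ^ n‖ = ((‖W ^ n‖₊ : ℝ)) := rfl
    _ ≤ ((rn ^ n : NNReal) : ℝ) := by exact_mod_cast hn
    _ = (rn : ℝ) ^ n := by push_cast; ring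
  · intro h i j
    have hmap : W ^ h = (Z ^ h).map (fun x : ℝ => (x : ℂ)) := by
      have e : W = Complex.ofRealHom.mapMatrix Z := rfl
      rw [e, ← map_pow]; rfl
    have h1 : |(Z ^ h) i j| = ‖(W ^ h) i j‖ := by
      rw [hmap]; simp [Matrix.map_apply, Complex.norm_real, Real.norm_eq_abs]
    rw [h1]
    have h2 : ‖(W ^ h) i j‖₊ ≤ ‖W ^ h‖₊ := by
      rw [Matrix.linfty_opNNNorm_def]
      refine le_trans ?_ (Finset.le_sup (Finset.mem_univ i))
      exact Finset.single_le_sum (f := fun j => ‖(W ^ h) i j‖₊) (fun _ _ => zero_le)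
        (Finset.mem_univ j)
    exact_mod_cast h2

end NormsAux

section MainAux

/-- Every 2×2 real matrix has a uniform entry bound. -/
lemma exists_entry_bound (A : Matrix (Fin 2) (Fin 2) ℝ) :
    ∃ D : ℝ, 0 ≤ D ∧ ∀ i j, |A i j| ≤ D := by
  refine ⟨∑ i : Fin 2, ∑ j : Fin 2, |A i j|, by positivity, fun i j => ?_⟩
  calc |A i j| ≤ ∑ j' : Fin 2, |A i j'| :=
        Finset.single_le_sum (f := fun j' => |A i j'|) (fun _ _ => abs_nonneg _)
          (Finset.mem_univ j)
  _ ≤ ∑ i' : Fin 2, ∑ j' : Fin 2, |A i' j'| :=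
        Finset.single_le_sum (f := fun i' => ∑ j' : Fin 2, |A i' j'|)
          (fun _ _ => Finset.sum_nonneg fun _ _ => abs_nonneg _) (Finset.mem_univ i)

/-- Conjugated powers. -/
lemma conj_pow_eq {T Z : Matrix (Fin 2) (Fin 2) ℝ} (hT : IsUnit T.det) (h : ℕ) :
    (T * Z * T⁻¹) ^ h = T * Z ^ h * T⁻¹ := by
  induction h with
  | zero => simp [Matrix.mul_nonsing_inv T hT]
  | succ n ih =>
    rw [pow_succ, ih, pow_succ]
    calc T * Z ^ n * T⁻¹ * (T * Z * T⁻¹) = T * Z ^ n * (T⁻¹ * T) * Z * T⁻¹ := by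
          simp only [Matrix.mul_assoc]
    _ = T * (Z ^ n * Z) * T⁻¹ := by
          rw [Matrix.nonsing_inv_mul T hT]; simp only [Matrix.mul_assoc, Matrix.mul_one]
    _ = T * (Z ^ n * Z) * T⁻¹ := rfl

/-- Entry bound for a product of a bounded row with bounded square matrices. -/
lemma abs_mul_entry_le (ψr : Matrix (Fin 1) (Fin 2) ℝ) (B : Matrix (Fin 2) (Fin 2) ℝ)
    (D c : ℝ) (hc : 0 ≤ c) (hψ : ∀ i j, |ψr i j| ≤ D) (hB : ∀ k l, |B k l| ≤ c)
    (i : Fin 1) (j : Fin 2) : |(ψr * B) i j| ≤ 2 * (D * c) := by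
  have hD : 0 ≤ D := le_trans (abs_nonneg _) (hψ i j)
  rw [Matrix.mul_apply]
  calc |∑ k : Fin 2, ψr i k * B k j| ≤ ∑ k : Fin 2, |ψr i k * B k j| := Finset.abs_sum_le_sum_abs _ _
  _ ≤ ∑ _k : Fin 2, D * c := by
      refine Finset.sum_le_sum fun k _ => ?_
      rw [abs_mul]
      exact mul_le_mul (hψ i k) (hB k j) (abs_nonneg _) hD
  _ = 2 * (D * c) := by simp [Finset.sum_const]

/-- Entry bound for products of two square matrices. -/
lemma abs_sq_mul_entry_le (A B : Matrix (Fin 2) (Fin 2) ℝ)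
    (D c : ℝ) (hD : 0 ≤ D) (hc : 0 ≤ c) (hA : ∀ i j, |A i j| ≤ D) (hB : ∀ k l, |B k l| ≤ c)
    (i j : Fin 2) : |(A * B) i j| ≤ 2 * (D * c) := by
  rw [Matrix.mul_apply]
  calc |∑ k : Fin 2, A i k * B k j| ≤ ∑ k : Fin 2, |A i k * B k j| := Finset.abs_sum_le_sum_abs _ _
  _ ≤ ∑ _k : Fin 2, D * c := by
      refine Finset.sum_le_sum fun k _ => ?_
      rw [abs_mul]
      exact mul_le_mul (hA i k) (hB k j) (abs_nonneg _) hD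
  _ = 2 * (D * c) := by simp [Finset.sum_const]

/-- Summability of a series of rows times matrices, given entrywise bounds. -/
lemma summable_row_mul (ψr : ℕ → Matrix (Fin 1) (Fin 2) ℝ) (D : ℝ)
    (hψ : ∀ h i j, |ψr h i j| ≤ D)
    (c : ℕ → ℝ) (hc0 : ∀ h, 0 ≤ c h) (hc : Summable c)
    (Zs : ℕ → Matrix (Fin 2) (Fin 2) ℝ) (hZs : ∀ h k l, |(Zs h) k l| ≤ c h) :
    Summable (fun h => ψr h * Zs h) := by
  refine Pi.summable.mpr ?_; intro i
  rw [Pi.summable]; intro j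
  apply Summable.of_norm_bounded (g := fun h => 2 * D * c h) (hc.mul_left (2 * D))
  intro h
  rw [Real.norm_eq_abs]
  have := abs_mul_entry_le (ψr h) (Zs h) D (c h) (hc0 h) (hψ h) (hZs h) i j
  linarith

/-- Right multiplication as a continuous linear map. -/
def mulRightCLM (a : Matrix (Fin 2) (Fin 2) ℝ) :
    Matrix (Fin 1) (Fin 2) ℝ →L[ℝ] Matrix (Fin 1) (Fin 2) ℝ where
  toFun X := X * a
  map_add' X Y := Matrix.add_mul X Y a
  map_smul' r X := Matrix.smul_mul r X a
  cont := Continuous.matrix_mul continuous_id continuous_const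

lemma tsum_mul_right_mat (f : ℕ → Matrix (Fin 1) (Fin 2) ℝ) (a : Matrix (Fin 2) (Fin 2) ℝ)
    (hf : Summable f) : ∑' n, f n * a = (∑' n, f n) * a :=
  ((mulRightCLM a).map_tsum hf).symm

end MainAux

/-- the recursive relation (3.14) for the matrix generating function
φ(Z,m) = Σ_h ψ(K+h+1,m)·Z^h, with all three series convergent. -/
theorem statement15 (lam mu0 mu1 gam s : ℝ) (K : ℕ)
    (hlam : 0 < lam) (hmu0 : 0 < mu0) (hmu1 : 0 < mu1) (hgam : 0 < gam) (hs : 0 < s)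
    (hK : 1 ≤ K)
    (ψ : ℕ → ℕ → Matrix (Fin 1) (Fin 2) ℝ)
    (hψ : IsVecSol lam mu0 mu1 gam s K ψ)
    (Z : Matrix (Fin 2) (Fin 2) ℝ)
    (hZ : SpecLtOne Z)
    (hTM : IsUnit (TMm lam mu0 mu1 gam s)) (hTL : IsUnit (TLm lam mu0 mu1 gam s)) :
    ∀ m : ℕ,
      Summable (fun h : ℕ => ψ (K + h + 1) m * Z ^ h) ∧
      Summable (fun h : ℕ => ψ (K + h + 1) m *
        (TMm lam mu0 mu1 gam s * Z * (TMm lam mu0 mu1 gam s)⁻¹) ^ h) ∧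
      Summable (fun h : ℕ => ψ (K + h + 1) (m + 1) *
        (TLm lam mu0 mu1 gam s * Z * (TLm lam mu0 mu1 gam s)⁻¹) ^ h) ∧
      (∑' h : ℕ, ψ (K + h + 1) m * Z ^ h) =
        ψ K m * TMm lam mu0 mu1 gam s +
        (∑' h : ℕ, ψ (K + h + 1) m *
          (TMm lam mu0 mu1 gam s * Z * (TMm lam mu0 mu1 gam s)⁻¹) ^ h) *
          (TMm lam mu0 mu1 gam s * Z) +
        (∑' h : ℕ, ψ (K + h + 1) (m + 1) *
          (TLm lam mu0 mu1 gam s * Z * (TLm lam mu0 mu1 gam s)⁻¹) ^ h) *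
          TLm lam mu0 mu1 gam s := by
  intro m
  obtain ⟨c, hc0, hcs, hcb⟩ := specLtOne_bound Z hZ
  set TM := TMm lam mu0 mu1 gam s with hTMdef
  set TL := TLm lam mu0 mu1 gam s with hTLdef
  have hTMd : IsUnit TM.det := (Matrix.isUnit_iff_isUnit_det TM).mp hTM
  have hTLd : IsUnit TL.det := (Matrix.isUnit_iff_isUnit_det TL).mp hTL
  -- invertibility of B = H - Γ₁
  set B : Matrix (Fin 2) (Fin 2) ℝ := Hm lam mu0 mu1 gam s - G1m gam with hBdef
  have hBd : IsUnit B.det := by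
    have hBe : B = !![gam + s + lam + mu0, 0; -gam, gam + s + lam + mu1 - gam] := by
      rw [hBdef, Hm, Lm, Mm, G1m]
      norm_num [Matrix.smul_eq_diagonal_mul]
      ext i j
      fin_cases i <;> fin_cases j <;>
        simp [Matrix.one_apply, Matrix.smul_apply, Matrix.add_apply, Matrix.sub_apply]
    rw [hBe, Matrix.det_fin_two_of]
    have : (gam + s + lam + mu0) * (gam + s + lam + mu1 - gam) - 0 * (-gam) > 0 := by nlinarith
    exact isUnit_iff_ne_zero.mpr (by nlinarith)
  -- entry bounds on ψ
  have hψb : ∀ n m' (i : Fin 1) (j : Fin 2), |ψ n m' i j| ≤ 1 := fun n m' i j =>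
    abs_le.mpr ⟨by linarith [(hψ.2.2.2 n m' i j).1], (hψ.2.2.2 n m' i j).2⟩
  -- the key recursion step
  have hstep : ∀ (n m' : ℕ), K ≤ n → ψ (n + 1) m' = ψ n m' * TM + ψ (n + 1) (m' + 1) * TL := by
    intro n m' hn
    have hrec := hψ.2.1 (n + 1) m' (by omega)
    rw [if_pos (by omega), Nat.add_sub_cancel] at hrec
    calc ψ (n + 1) m' = ψ (n + 1) m' * (B * B⁻¹) := by
          rw [Matrix.mul_nonsing_inv B hBd, Matrix.mul_one]
    _ = ψ (n + 1) m' * B * B⁻¹ := by rw [Matrix.mul_assoc]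
    _ = (ψ n m' * Mm mu0 mu1 + ψ (n + 1) (m' + 1) * Lm lam) * B⁻¹ := by rw [hrec]
    _ = ψ n m' * (Mm mu0 mu1 * B⁻¹) + ψ (n + 1) (m' + 1) * (Lm lam * B⁻¹) := by
          rw [Matrix.add_mul, Matrix.mul_assoc, Matrix.mul_assoc]
    _ = ψ n m' * TM + ψ (n + 1) (m' + 1) * TL := rfl
  -- entry bounds for the fixed matrices
  obtain ⟨DM, hDM0, hDM⟩ := exists_entry_bound TM
  obtain ⟨DMi, hDMi0, hDMi⟩ := exists_entry_bound TM⁻¹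
  obtain ⟨DL, hDL0, hDL⟩ := exists_entry_bound TL
  obtain ⟨DLi, hDLi0, hDLi⟩ := exists_entry_bound TL⁻¹
  -- series definitions
  set f : ℕ → Matrix (Fin 1) (Fin 2) ℝ := fun h => ψ (K + h + 1) m * Z ^ h with hf
  set u : ℕ → Matrix (Fin 1) (Fin 2) ℝ := fun h => ψ (K + h + 1) m * (TM * Z * TM⁻¹) ^ h with hu
  set v : ℕ → Matrix (Fin 1) (Fin 2) ℝ :=
    fun h => ψ (K + h + 1) (m + 1) * (TL * Z * TL⁻¹) ^ h with hv
  set g1 : ℕ → Matrix (Fin 1) (Fin 2) ℝ := fun h => ψ (K + h) m * (TM * Z ^ h) with hg1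
  set g2 : ℕ → Matrix (Fin 1) (Fin 2) ℝ := fun h => ψ (K + h + 1) (m + 1) * (TL * Z ^ h) with hg2
  -- summability
  have hfs : Summable f :=
    summable_row_mul _ 1 (fun h => hψb _ _) c hc0 hcs _ (fun h k l => hcb h k l)
  have hus : Summable u := by
    apply summable_row_mul _ 1 (fun h => hψb _ _) (fun h => 2 * (2 * (DM * c h) * DMi))
      (fun h => mul_nonneg (by norm_num) (mul_nonneg
        (mul_nonneg (by norm_num) (mul_nonneg hDM0 (hc0 h))) hDMi0))
      (((hcs.mul_left DM).mul_left 2).mul_right DMi |>.mul_left 2 |>.congr (fun h => by ring))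
    intro h k l
    rw [conj_pow_eq hTMd]
    exact abs_sq_mul_entry_le (TM * Z ^ h) TM⁻¹ (2 * (DM * c h)) DMi
      (mul_nonneg (by norm_num) (mul_nonneg hDM0 (hc0 h))) hDMi0
      (abs_sq_mul_entry_le TM (Z ^ h) DM (c h) hDM0 (hc0 h) hDM (hcb h)) hDMi k l
  have hvs : Summable v := by
    apply summable_row_mul _ 1 (fun h => hψb _ _) (fun h => 2 * (2 * (DL * c h) * DLi))
      (fun h => mul_nonneg (by norm_num) (mul_nonneg
        (mul_nonneg (by norm_num) (mul_nonneg hDL0 (hc0 h))) hDLi0))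
      (((hcs.mul_left DL).mul_left 2).mul_right DLi |>.mul_left 2 |>.congr (fun h => by ring))
    intro h k l
    rw [conj_pow_eq hTLd]
    exact abs_sq_mul_entry_le (TL * Z ^ h) TL⁻¹ (2 * (DL * c h)) DLi
      (mul_nonneg (by norm_num) (mul_nonneg hDL0 (hc0 h))) hDLi0
      (abs_sq_mul_entry_le TL (Z ^ h) DL (c h) hDL0 (hc0 h) hDL (hcb h)) hDLi k l
  have hg1s : Summable g1 := by
    apply summable_row_mul _ 1 (fun h => hψb _ _) (fun h => 2 * (DM * c h))
      (fun h => mul_nonneg (by norm_num) (mul_nonneg hDM0 (hc0 h)))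
      (((hcs.mul_left DM).mul_left 2).congr (fun h => by ring))
    exact fun h k l => abs_sq_mul_entry_le TM (Z ^ h) DM (c h) hDM0 (hc0 h) hDM (hcb h) k l
  have hg2s : Summable g2 := by
    apply summable_row_mul _ 1 (fun h => hψb _ _) (fun h => 2 * (DL * c h))
      (fun h => mul_nonneg (by norm_num) (mul_nonneg hDL0 (hc0 h)))
      (((hcs.mul_left DL).mul_left 2).congr (fun h => by ring))
    exact fun h k l => abs_sq_mul_entry_le TL (Z ^ h) DL (c h) hDL0 (hc0 h) hDL (hcb h) k l
  refine ⟨hfs, hus, hvs, ?_⟩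
  -- the algebraic identity f h = g1 h + g2 h
  have hre : ∀ h, f h = g1 h + g2 h := by
    intro h
    have := hstep (K + h) m (by omega)
    calc f h = (ψ (K + h) m * TM + ψ (K + h + 1) (m + 1) * TL) * Z ^ h := by
          rw [hf]; dsimp only; rw [← this]
    _ = g1 h + g2 h := by
          rw [Matrix.add_mul, Matrix.mul_assoc, Matrix.mul_assoc]
  -- conjugation identities
  have key2 : ∀ h, g1 (h + 1) = u h * (TM * Z) := by
    intro h
    have hc1 : (TM * Z * TM⁻¹) ^ h * (TM * Z) = TM * Z ^ (h + 1) := by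
      rw [conj_pow_eq hTMd]
      calc TM * Z ^ h * TM⁻¹ * (TM * Z) = TM * Z ^ h * (TM⁻¹ * TM) * Z := by
            simp only [Matrix.mul_assoc]
      _ = TM * (Z ^ h * Z) := by
            rw [Matrix.nonsing_inv_mul TM hTMd]
            simp only [Matrix.mul_assoc, Matrix.mul_one]
      _ = TM * Z ^ (h + 1) := by rw [← pow_succ]
    rw [hg1, hu]; dsimp only
    rw [← hc1, ← Matrix.mul_assoc, ← Nat.add_assoc]
  have key3 : ∀ h, g2 h = v h * TL := by
    intro h
    have hc1 : (TL * Z * TL⁻¹) ^ h * TL = TL * Z ^ h := by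
      rw [conj_pow_eq hTLd]
      calc TL * Z ^ h * TL⁻¹ * TL = TL * Z ^ h * (TL⁻¹ * TL) := by simp only [Matrix.mul_assoc]
      _ = TL * Z ^ h := by rw [Matrix.nonsing_inv_mul TL hTLd, Matrix.mul_one]
    rw [hg2, hv]; dsimp only
    rw [← hc1, ← Matrix.mul_assoc]
  -- put it all together
  have e1 : ∑' h, f h = (∑' h, g1 h) + ∑' h, g2 h := by
    rw [tsum_congr hre, Summable.tsum_add hg1s hg2s]
  have e2 : ∑' h, g1 h = ψ K m * TM + (∑' h, u h) * (TM * Z) := by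
    rw [Summable.tsum_eq_zero_add hg1s]
    congr 1
    · rw [hg1]; dsimp only; rw [pow_zero, Matrix.mul_one, Nat.add_zero]
    · rw [tsum_congr key2, tsum_mul_right_mat u (TM * Z) hus]
  have e3 : ∑' h, g2 h = (∑' h, v h) * TL := by
    rw [tsum_congr key3, tsum_mul_right_mat v TL hvs]
  rw [e1, e2, e3, add_assoc]
end

section
/- Let ψ be a solution of the vector sojourn-time recursion, let Z be a 2×2 real matrix whose eigenvalues all have modulus strictly less than 1, assume T_M(s) and T_Λ(s) are invertible and every eigenvalue of T_M(s) has modulus strictly less than 1. Then for every m with 0 ≤ m ≤ K−1, φ(Z,m) = ψ(K,m)·T_M(s)·S(Z, I, T_M(s)) + Σ_{h=0}^∞ φ(T_Λ(s)·T_M(s)^h·Z·T_M(s)^{−h}·T_Λ(s)^{−1}, m+1) · T_Λ(s)·T_M(s)^h·Z^h, where all the series involved converge. -/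
/- ### Auxiliary topological lemmas (no norm needed) -/

theorem st16.hasSum_mul_right {ι : Type*} {f : ι → Matrix (Fin 1) (Fin 2) ℝ}
    {a : Matrix (Fin 1) (Fin 2) ℝ} (hf : HasSum f a) (B : Matrix (Fin 2) (Fin 2) ℝ) :
    HasSum (fun k => f k * B) (a * B) :=
  hf.map (AddMonoidHom.mk' (fun X : Matrix (Fin 1) (Fin 2) ℝ => X * B)
    (fun x y => Matrix.add_mul x y B)) (Continuous.matrix_mul continuous_id continuous_const)

theorem st16.hasSum_mul_left {ι : Type*} {f : ι → Matrix (Fin 2) (Fin 2) ℝ}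
    {a : Matrix (Fin 2) (Fin 2) ℝ} (hf : HasSum f a) (c : Matrix (Fin 1) (Fin 2) ℝ) :
    HasSum (fun k => c * f k) (c * a) :=
  hf.map (AddMonoidHom.mk' (fun X : Matrix (Fin 2) (Fin 2) ℝ => c * X)
    (fun x y => Matrix.mul_add c x y)) (Continuous.matrix_mul continuous_const continuous_id)

/- ### Auxiliary normed lemmas -/

section Aux

attribute [local instance] Matrix.linftyOpNormedAddCommGroup Matrix.linftyOpNormedSpace
  Matrix.linftyOpNormedRing Matrix.linftyOpNormedAlgebra

open scoped Matrix

theorem st16.row_norm_le2 (v : Matrix (Fin 1) (Fin 2) ℝ)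
    (hv : ∀ i j, 0 ≤ v i j ∧ v i j ≤ 1) : ‖v‖ ≤ 2 := by
  rw [Matrix.linfty_opNorm_def]
  have h0 : ∀ i j, ‖v i j‖₊ ≤ 1 := by
    intro i j
    rw [← NNReal.coe_le_coe]
    simp only [coe_nnnorm, Real.norm_eq_abs, NNReal.coe_one]
    exact abs_le.mpr ⟨by linarith [(hv i j).1], (hv i j).2⟩
  have : (Finset.univ : Finset (Fin 1)).sup (fun i => ∑ j, ‖v i j‖₊) ≤ 2 := by
    apply Finset.sup_le
    intro i _
    calc ∑ j, ‖v i j‖₊ ≤ ∑ _j : Fin 2, 1 := Finset.sum_le_sum fun j _ => h0 i j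
      _ = 2 := by simp
  exact_mod_cast this

theorem st16.geom_bound {Z : Matrix (Fin 2) (Fin 2) ℝ} (hZ : SpecLtOne Z) :
    ∃ C r : ℝ, 0 ≤ C ∧ 0 ≤ r ∧ r < 1 ∧ ∀ n, ‖Z ^ n‖ ≤ C * r ^ n := by
  set Zc : Matrix (Fin 2) (Fin 2) ℂ := Z.map (fun x : ℝ => (x:ℂ)) with hZc
  have hrad : spectralRadius ℂ Zc < 1 := by
    have := spectrum.spectralRadius_lt_of_forall_lt (a := Zc) (r := 1) ?_
    · simpa using this
    · intro z hz
      exact_mod_cast hZ z hz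
  obtain ⟨r, hr1, hr2⟩ := ENNReal.lt_iff_exists_nnreal_btwn.mp hrad
  have hr2' : r < 1 := by exact_mod_cast hr2
  have htends := spectrum.pow_nnnorm_pow_one_div_tendsto_nhds_spectralRadius Zc
  have hev : ∀ᶠ n : ℕ in Filter.atTop, (‖Zc ^ n‖₊ : ENNReal) ^ (1 / (n:ℝ)) < r :=
    htends.eventually_lt_const hr1
  obtain ⟨N, hN⟩ := hev.exists_forall_of_atTop
  have key : ∀ n, max N 1 ≤ n → ‖Zc ^ n‖₊ < r ^ n := by
    intro n hn
    have hn1 : 1 ≤ n := le_trans (le_max_right _ _) hn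
    have h := hN n (le_trans (le_max_left _ _) hn)
    have hne : (n : ℝ) ≠ 0 := by positivity
    have h2 := ENNReal.rpow_lt_rpow h (show (0:ℝ) < n by positivity)
    rw [← ENNReal.rpow_mul, one_div, inv_mul_cancel₀ hne, ENNReal.rpow_one,
      ENNReal.rpow_natCast] at h2
    exact_mod_cast h2
  classical
  set Nb := max N 1
  have hnorm_eq : ∀ k : ℕ, ‖Z ^ k‖₊ = ‖Zc ^ k‖₊ := by
    intro k
    have : Zc ^ k = (Z ^ k).map (fun x : ℝ => (x:ℂ)) := by
      rw [hZc]
      exact (map_pow ((algebraMap ℝ ℂ).mapMatrix) Z k).symm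
    rw [this]
    simp [Matrix.linfty_opNNNorm_def, Matrix.map_apply]
  set ρ : ℝ := max (r:ℝ) (1/2) with hρ
  have hρ0 : 0 < ρ := lt_of_lt_of_le one_half_pos (le_max_right _ _)
  have hρ1 : ρ < 1 := max_lt (by exact_mod_cast hr2') one_half_lt_one
  set C : ℝ := (Finset.range (Nb+1)).sup' (by simp) (fun k => ‖Z ^ k‖ / ρ ^ k) ⊔ 1 with hC
  have hC1 : (1:ℝ) ≤ C := le_max_right _ _
  refine ⟨C, ρ, le_trans zero_le_one hC1, le_of_lt hρ0, hρ1, ?_⟩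
  intro n
  have hnormeq : ‖Z ^ n‖ = ‖Zc ^ n‖ := congrArg NNReal.toReal (hnorm_eq n)
  rcases le_or_gt Nb n with hge | hlt
  · have h1 : ‖Zc ^ n‖₊ < r ^ n := key n hge
    have h2 : ‖Zc ^ n‖ ≤ (r:ℝ) ^ n := by exact_mod_cast h1.le
    calc ‖Z ^ n‖ ≤ (r:ℝ) ^ n := hnormeq ▸ h2
      _ ≤ ρ ^ n := pow_le_pow_left₀ r.coe_nonneg (le_max_left _ _) n
      _ = 1 * ρ ^ n := (one_mul _).symm
      _ ≤ C * ρ ^ n := by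
          have := pow_nonneg (le_of_lt hρ0) n
          nlinarith
  · have hmem : n ∈ Finset.range (Nb+1) := Finset.mem_range.mpr (by omega)
    have hle : ‖Z ^ n‖ / ρ ^ n ≤ C :=
      le_trans (Finset.le_sup' (f := fun k => ‖Z ^ k‖ / ρ ^ k) hmem) (le_max_left _ _)
    have hpow : (0:ℝ) < ρ ^ n := pow_pos hρ0 n
    calc ‖Z ^ n‖ = (‖Z ^ n‖ / ρ ^ n) * ρ ^ n := by field_simp
      _ ≤ C * ρ ^ n := mul_le_mul_of_nonneg_right hle hpow.le

theorem st16.aux_summable1 (v : ℕ → Matrix (Fin 1) (Fin 2) ℝ)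
    (hv : ∀ n i j, 0 ≤ v n i j ∧ v n i j ≤ 1)
    {Z : Matrix (Fin 2) (Fin 2) ℝ} (hZ : SpecLtOne Z)
    (P Q : Matrix (Fin 2) (Fin 2) ℝ) :
    Summable (fun k => v k * (P * Z ^ k * Q)) := by
  obtain ⟨C, r, hC, hr0, hr1, hb⟩ := st16.geom_bound hZ
  apply Summable.of_norm_bounded (g := fun k => (2 * ‖P‖ * ‖Q‖ * C) * r ^ k)
    (((summable_geometric_of_lt_one hr0 hr1).mul_left _))
  intro k
  calc ‖v k * (P * Z ^ k * Q)‖ ≤ ‖v k‖ * ‖P * Z ^ k * Q‖ := Matrix.linfty_opNorm_mul _ _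
    _ ≤ 2 * ‖P * Z ^ k * Q‖ :=
        mul_le_mul_of_nonneg_right (st16.row_norm_le2 _ (hv k)) (norm_nonneg _)
    _ ≤ 2 * (‖P * Z ^ k‖ * ‖Q‖) :=
        mul_le_mul_of_nonneg_left (Matrix.linfty_opNorm_mul _ _) (by norm_num)
    _ ≤ 2 * ((‖P‖ * ‖Z ^ k‖) * ‖Q‖) := by
        refine mul_le_mul_of_nonneg_left ?_ (by norm_num)
        exact mul_le_mul_of_nonneg_right (Matrix.linfty_opNorm_mul P (Z ^ k)) (norm_nonneg _)
    _ ≤ 2 * ((‖P‖ * (C * r ^ k)) * ‖Q‖) := by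
        refine mul_le_mul_of_nonneg_left
          (mul_le_mul_of_nonneg_right ?_ (norm_nonneg _)) (by norm_num)
        exact mul_le_mul_of_nonneg_left (hb k) (norm_nonneg _)
    _ = (2 * ‖P‖ * ‖Q‖ * C) * r ^ k := by ring

theorem st16.aux_summable2 {T Z : Matrix (Fin 2) (Fin 2) ℝ}
    (hT : SpecLtOne T) (hZ : SpecLtOne Z) :
    Summable (fun h => T ^ h * (1 : Matrix (Fin 2) (Fin 2) ℝ) * Z ^ h) := by
  obtain ⟨C, r, hC, hr0, hr1, hb⟩ := st16.geom_bound hZ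
  obtain ⟨C', r', hC', hr0', hr1', hb'⟩ := st16.geom_bound hT
  apply Summable.of_norm_bounded (g := fun h => (C' * C) * (r' * r) ^ h)
    (((summable_geometric_of_lt_one (by positivity) (by nlinarith)).mul_left _))
  intro h
  calc ‖T ^ h * 1 * Z ^ h‖ ≤ ‖T ^ h * 1‖ * ‖Z ^ h‖ := Matrix.linfty_opNorm_mul _ _
    _ = ‖T ^ h‖ * ‖Z ^ h‖ := by rw [mul_one]
    _ ≤ (C' * r' ^ h) * (C * r ^ h) :=
        mul_le_mul (hb' h) (hb h) (norm_nonneg _) (mul_nonneg hC' (pow_nonneg hr0' h))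
    _ = (C' * C) * (r' * r) ^ h := by rw [mul_pow]; ring

theorem st16.aux_summable4 (v : ℕ → Matrix (Fin 1) (Fin 2) ℝ)
    (hv : ∀ n i j, 0 ≤ v n i j ∧ v n i j ≤ 1)
    {T Z : Matrix (Fin 2) (Fin 2) ℝ} (hT : SpecLtOne T) (hZ : SpecLtOne Z)
    (W : Matrix (Fin 2) (Fin 2) ℝ) :
    Summable (fun p : ℕ × ℕ => v p.1 * W * T ^ p.2 * Z ^ (p.2 + p.1)) := by
  obtain ⟨C, r, hC, hr0, hr1, hb⟩ := st16.geom_bound hZ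
  obtain ⟨C', r', hC', hr0', hr1', hb'⟩ := st16.geom_bound hT
  have hsum : Summable (fun p : ℕ × ℕ => (r : ℝ) ^ p.1 * (r' * r) ^ p.2) := by
    apply Summable.mul_of_nonneg (summable_geometric_of_lt_one hr0 hr1)
      (summable_geometric_of_lt_one (by positivity) (by nlinarith))
    · exact fun n => pow_nonneg hr0 n
    · exact fun n => pow_nonneg (by positivity) n
  apply Summable.of_norm_bounded
    (g := fun p : ℕ × ℕ => (2 * ‖W‖ * C' * C) * (r ^ p.1 * (r' * r) ^ p.2)) (hsum.mul_left _)
  rintro ⟨k, i⟩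
  simp only
  have h1 : ‖v k * W * T ^ i * Z ^ (i + k)‖ ≤ ‖v k‖ * ‖W‖ * ‖T ^ i‖ * ‖Z ^ (i+k)‖ := by
    calc ‖v k * W * T ^ i * Z ^ (i+k)‖ ≤ ‖v k * W * T ^ i‖ * ‖Z ^ (i+k)‖ :=
          Matrix.linfty_opNorm_mul _ _
      _ ≤ (‖v k * W‖ * ‖T ^ i‖) * ‖Z ^ (i+k)‖ :=
          mul_le_mul_of_nonneg_right (Matrix.linfty_opNorm_mul _ _) (norm_nonneg _)
      _ ≤ ((‖v k‖ * ‖W‖) * ‖T ^ i‖) * ‖Z ^ (i+k)‖ := by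
          refine mul_le_mul_of_nonneg_right ?_ (norm_nonneg _)
          exact mul_le_mul_of_nonneg_right (Matrix.linfty_opNorm_mul (v k) W) (norm_nonneg _)
  have h2 := st16.row_norm_le2 _ (hv k)
  have h3 := hb' i
  have h4 := hb (i + k)
  have e1 : (0:ℝ) ≤ ‖W‖ := norm_nonneg _
  have e2 : (0:ℝ) ≤ ‖T ^ i‖ := norm_nonneg _
  have e3 : (0:ℝ) ≤ ‖Z ^ (i+k)‖ := norm_nonneg _
  have key : ‖v k‖ * ‖W‖ * ‖T ^ i‖ * ‖Z ^ (i+k)‖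
      ≤ 2 * ‖W‖ * (C' * r' ^ i) * (C * r ^ (i+k)) := by
    refine mul_le_mul ?_ h4 e3 ?_
    · refine mul_le_mul ?_ h3 e2 (by positivity)
      exact mul_le_mul_of_nonneg_right h2 e1
    · positivity
  calc ‖v k * W * T ^ i * Z ^ (i+k)‖ ≤ 2 * ‖W‖ * (C' * r' ^ i) * (C * r ^ (i+k)) :=
        le_trans h1 key
    _ = (2 * ‖W‖ * C' * C) * (r ^ k * (r' * r) ^ i) := by
        rw [pow_add, mul_pow]; ring

end Aux

set_option maxHeartbeats 1600000 in
/-- the iterated recursion (3.19) for the matrix generating function,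
with S(Z,A,B) = Σ_h B^h·A·Z^h; all series involved converge. -/
theorem statement16 (lam mu0 mu1 gam s : ℝ) (K : ℕ)
    (hlam : 0 < lam) (hmu0 : 0 < mu0) (hmu1 : 0 < mu1) (hgam : 0 < gam) (hs : 0 < s)
    (hK : 1 ≤ K)
    (ψ : ℕ → ℕ → Matrix (Fin 1) (Fin 2) ℝ)
    (hψ : IsVecSol lam mu0 mu1 gam s K ψ)
    (Z : Matrix (Fin 2) (Fin 2) ℝ)
    (hZ : SpecLtOne Z)
    (hTM : IsUnit (TMm lam mu0 mu1 gam s)) (hTL : IsUnit (TLm lam mu0 mu1 gam s))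
    (hTMe : SpecLtOne (TMm lam mu0 mu1 gam s)) :
    ∀ m : ℕ, m ≤ K - 1 →
      Summable (fun h : ℕ => ψ (K + h + 1) m * Z ^ h) ∧
      Summable (fun h : ℕ =>
        (TMm lam mu0 mu1 gam s) ^ h * (1 : Matrix (Fin 2) (Fin 2) ℝ) * Z ^ h) ∧
      (∀ h : ℕ, Summable (fun k : ℕ => ψ (K + k + 1) (m + 1) *
        (TLm lam mu0 mu1 gam s * (TMm lam mu0 mu1 gam s) ^ h * Z *
          ((TMm lam mu0 mu1 gam s)⁻¹) ^ h * (TLm lam mu0 mu1 gam s)⁻¹) ^ k)) ∧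
      Summable (fun h : ℕ =>
        (∑' k : ℕ, ψ (K + k + 1) (m + 1) *
          (TLm lam mu0 mu1 gam s * (TMm lam mu0 mu1 gam s) ^ h * Z *
            ((TMm lam mu0 mu1 gam s)⁻¹) ^ h * (TLm lam mu0 mu1 gam s)⁻¹) ^ k) *
          (TLm lam mu0 mu1 gam s * (TMm lam mu0 mu1 gam s) ^ h * Z ^ h)) ∧
      (∑' h : ℕ, ψ (K + h + 1) m * Z ^ h) =
        ψ K m * TMm lam mu0 mu1 gam s *
          (∑' h : ℕ,
            (TMm lam mu0 mu1 gam s) ^ h * (1 : Matrix (Fin 2) (Fin 2) ℝ) * Z ^ h) +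
        ∑' h : ℕ,
          (∑' k : ℕ, ψ (K + k + 1) (m + 1) *
            (TLm lam mu0 mu1 gam s * (TMm lam mu0 mu1 gam s) ^ h * Z *
              ((TMm lam mu0 mu1 gam s)⁻¹) ^ h * (TLm lam mu0 mu1 gam s)⁻¹) ^ k) *
            (TLm lam mu0 mu1 gam s * (TMm lam mu0 mu1 gam s) ^ h * Z ^ h) := by
  obtain ⟨hψ0, hrec, hKm, hbnd⟩ := hψ
  intro m hm
  classical
  -- abbreviations (not `set`, to keep goal form)
  -- invertibility of H - Γ1
  have hHmat : Hm lam mu0 mu1 gam s - G1m gam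
      = !![gam+s+lam+mu0, 0; -gam, s+lam+mu1] := by
    simp [Hm, G1m, Lm, Mm]
    ext i j
    fin_cases i <;> fin_cases j <;> simp [Matrix.one_apply] <;> ring
  have hdetH : IsUnit (Hm lam mu0 mu1 gam s - G1m gam).det := by
    rw [hHmat, Matrix.det_fin_two_of]
    apply isUnit_iff_ne_zero.mpr
    nlinarith
  -- the one-step recursion
  have hstep : ∀ n m', K < n + 1 + m' →
      ψ (n+1) m' = ψ n m' * TMm lam mu0 mu1 gam s
        + ψ (n+1) (m'+1) * TLm lam mu0 mu1 gam s := by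
    intro n m' hKn
    have h := hrec (n+1) m' (by omega)
    rw [if_pos hKn] at h
    simp only [Nat.add_sub_cancel] at h
    have h2 : ψ (n+1) m' * ((Hm lam mu0 mu1 gam s - G1m gam) * (Hm lam mu0 mu1 gam s - G1m gam)⁻¹)
        = (ψ n m' * Mm mu0 mu1 + ψ (n+1) (m'+1) * Lm lam) * (Hm lam mu0 mu1 gam s - G1m gam)⁻¹ := by
      rw [← Matrix.mul_assoc, h]
    rw [Matrix.mul_nonsing_inv _ hdetH, Matrix.mul_one] at h2
    rw [h2, Matrix.add_mul, Matrix.mul_assoc, Matrix.mul_assoc]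
    rfl
  -- unrolled recursion
  have hunroll : ∀ h : ℕ, ψ (K + h + 1) m
      = ψ K m * TMm lam mu0 mu1 gam s ^ (h+1)
        + ∑ j ∈ Finset.range (h+1), ψ (K + j + 1) (m+1) *
            (TLm lam mu0 mu1 gam s * TMm lam mu0 mu1 gam s ^ (h - j)) := by
    intro h
    induction h with
    | zero =>
      have h0 := hstep K m (by omega)
      simpa using h0
    | succ h ih =>
      have hst := hstep (K + h + 1) m (by omega)
      have hgoal : ψ (K + (h+1) + 1) m = ψ (K + h + 1) m * TMm lam mu0 mu1 gam s
          + ψ (K + (h+1) + 1) (m+1) * TLm lam mu0 mu1 gam s := hst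
      rw [hgoal, ih, Matrix.add_mul, Matrix.sum_mul]
      have e1 : ψ K m * TMm lam mu0 mu1 gam s ^ (h+1) * TMm lam mu0 mu1 gam s
          = ψ K m * TMm lam mu0 mu1 gam s ^ (h+1+1) := by
        rw [Matrix.mul_assoc, ← pow_succ]
      have e2 : ∀ j ∈ Finset.range (h+1),
          ψ (K + j + 1) (m+1) * (TLm lam mu0 mu1 gam s * TMm lam mu0 mu1 gam s ^ (h - j))
            * TMm lam mu0 mu1 gam s
          = ψ (K + j + 1) (m+1) *
              (TLm lam mu0 mu1 gam s * TMm lam mu0 mu1 gam s ^ (h + 1 - j)) := by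
        intro j hj
        rw [Finset.mem_range] at hj
        rw [Matrix.mul_assoc, Matrix.mul_assoc, ← pow_succ]
        have : h - j + 1 = h + 1 - j := by omega
        rw [this]
      rw [e1, Finset.sum_congr rfl e2,
        Finset.sum_range_succ (fun j => ψ (K + j + 1) (m+1) *
          (TLm lam mu0 mu1 gam s * TMm lam mu0 mu1 gam s ^ (h + 1 - j))) (h+1)]
      have e3 : h + 1 - (h + 1) = 0 := by omega
      rw [e3, pow_zero, Matrix.mul_one, add_assoc]
  -- unit/cancellation facts
  have hdTL : IsUnit (TLm lam mu0 mu1 gam s).det := (Matrix.isUnit_iff_isUnit_det _).mp hTL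
  have hdTM : IsUnit (TMm lam mu0 mu1 gam s).det := (Matrix.isUnit_iff_isUnit_det _).mp hTM
  have hdTMp : ∀ h : ℕ, IsUnit ((TMm lam mu0 mu1 gam s ^ h)).det := by
    intro h; rw [Matrix.det_pow]; exact hdTM.pow h
  have cL1 : ∀ X : Matrix (Fin 2) (Fin 2) ℝ,
      (TLm lam mu0 mu1 gam s)⁻¹ * (TLm lam mu0 mu1 gam s * X) = X := by
    intro X; rw [← mul_assoc, Matrix.nonsing_inv_mul _ hdTL, one_mul]
  have cM1 : ∀ (h : ℕ) (X : Matrix (Fin 2) (Fin 2) ℝ),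
      ((TMm lam mu0 mu1 gam s)⁻¹) ^ h * (TMm lam mu0 mu1 gam s ^ h * X) = X := by
    intro h X
    rw [Matrix.inv_pow', ← mul_assoc, Matrix.nonsing_inv_mul _ (hdTMp h), one_mul]
  have cM2 : ∀ (h : ℕ) (X : Matrix (Fin 2) (Fin 2) ℝ),
      TMm lam mu0 mu1 gam s ^ h * ((TMm lam mu0 mu1 gam s ^ h)⁻¹ * X) = X := by
    intro h X
    rw [← mul_assoc, Matrix.mul_nonsing_inv _ (hdTMp h), one_mul]
  have tL : TLm lam mu0 mu1 gam s * (TLm lam mu0 mu1 gam s)⁻¹ = 1 :=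
    Matrix.mul_nonsing_inv _ hdTL
  -- conjugation
  have hconj : ∀ h k : ℕ,
      (TLm lam mu0 mu1 gam s * TMm lam mu0 mu1 gam s ^ h * Z *
        ((TMm lam mu0 mu1 gam s)⁻¹) ^ h * (TLm lam mu0 mu1 gam s)⁻¹) ^ k
      = TLm lam mu0 mu1 gam s * (TMm lam mu0 mu1 gam s ^ h *
          (Z ^ k * (((TMm lam mu0 mu1 gam s)⁻¹) ^ h * (TLm lam mu0 mu1 gam s)⁻¹))) := by
    intro h k
    induction k with
    | zero =>
      rw [pow_zero, pow_zero, one_mul, Matrix.inv_pow', cM2, tL]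
    | succ k ih =>
      rw [pow_succ, ih]
      simp only [mul_assoc, cL1, cM1]
      rw [← mul_assoc (Z ^ k) Z, ← pow_succ]
  -- bounded family
  have hvb : ∀ n (i : Fin 1) (j : Fin 2),
      0 ≤ ψ (K + n + 1) (m+1) i j ∧ ψ (K + n + 1) (m+1) i j ≤ 1 :=
    fun n i j => hbnd _ _ i j
  -- the double-indexed family
  set F : ℕ × ℕ → Matrix (Fin 1) (Fin 2) ℝ := fun p =>
    ψ (K + p.1 + 1) (m+1) * TLm lam mu0 mu1 gam s * TMm lam mu0 mu1 gam s ^ p.2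
      * Z ^ (p.2 + p.1) with hFdef
  have hFsummable : Summable F :=
    st16.aux_summable4 (fun n => ψ (K + n + 1) (m+1)) hvb hTMe hZ _
  have hS : HasSum F (∑' p, F p) := hFsummable.hasSum
  -- fiberwise summability (over k, for fixed i)
  have hfiber : ∀ i, Summable (fun k => F (k, i)) := by
    intro i
    apply Summable.congr (st16.aux_summable1 (fun n => ψ (K + n + 1) (m+1)) hvb hZ
      (TLm lam mu0 mu1 gam s * TMm lam mu0 mu1 gam s ^ i * Z ^ i) 1)
    intro k
    simp only [hFdef, Matrix.mul_one]
    rw [pow_add]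
    simp only [Matrix.mul_assoc]
  -- diagonal grouping
  have hdiag : HasSum (fun n => ∑ p ∈ Finset.HasAntidiagonal.antidiagonal n, F p) (∑' p, F p) := by
    apply HasSum.sigma ((Finset.HasAntidiagonal.sigmaAntidiagonalEquivProd (A := ℕ)).hasSum_iff.mpr hS)
    intro n
    have := hasSum_fintype (fun c : (Finset.HasAntidiagonal.antidiagonal n : Finset (ℕ × ℕ)) => F c)
    rwa [Finset.sum_coe_sort] at this
  -- column grouping
  have hswap : HasSum (fun q : ℕ × ℕ => F (q.2, q.1)) (∑' p, F p) :=
    ((Equiv.prodComm ℕ ℕ).hasSum_iff).mpr hS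
  have hcols : HasSum (fun i => ∑' k, F (k, i)) (∑' p, F p) :=
    hswap.prod_fiberwise (fun i => (hfiber i).hasSum)
  -- goal 3 summability
  have hS3 : ∀ h : ℕ, Summable (fun k : ℕ => ψ (K + k + 1) (m + 1) *
      (TLm lam mu0 mu1 gam s * (TMm lam mu0 mu1 gam s) ^ h * Z *
        ((TMm lam mu0 mu1 gam s)⁻¹) ^ h * (TLm lam mu0 mu1 gam s)⁻¹) ^ k) := by
    intro h
    apply Summable.congr (st16.aux_summable1 (fun n => ψ (K + n + 1) (m+1)) hvb hZ
      (TLm lam mu0 mu1 gam s * TMm lam mu0 mu1 gam s ^ h)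
      (((TMm lam mu0 mu1 gam s)⁻¹) ^ h * (TLm lam mu0 mu1 gam s)⁻¹))
    intro k
    rw [hconj h k]
    simp only [Matrix.mul_assoc]
  -- the key tsum identity for columns
  have hg : ∀ i, (∑' k : ℕ, ψ (K + k + 1) (m + 1) *
      (TLm lam mu0 mu1 gam s * (TMm lam mu0 mu1 gam s) ^ i * Z *
        ((TMm lam mu0 mu1 gam s)⁻¹) ^ i * (TLm lam mu0 mu1 gam s)⁻¹) ^ k) *
      (TLm lam mu0 mu1 gam s * (TMm lam mu0 mu1 gam s) ^ i * Z ^ i)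
      = ∑' k, F (k, i) := by
    intro i
    rw [← (st16.hasSum_mul_right (hS3 i).hasSum
      (TLm lam mu0 mu1 gam s * (TMm lam mu0 mu1 gam s) ^ i * Z ^ i)).tsum_eq]
    apply tsum_congr
    intro k
    rw [hconj i k]
    simp only [hFdef, Matrix.mul_assoc, cL1, cM1]
    rw [← pow_add, Nat.add_comm k i]
  -- assemble
  refine ⟨?_, ?_, hS3, ?_, ?_⟩
  · apply Summable.congr (st16.aux_summable1 (fun n => ψ (K + n + 1) m)
      (fun n i j => hbnd _ _ i j) hZ 1 1)
    intro k
    rw [one_mul, mul_one]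
  · exact st16.aux_summable2 hTMe hZ
  · exact Summable.congr hcols.summable (fun i => (hg i).symm)
  · -- the main identity
    have hcols' : HasSum (fun i => (∑' k : ℕ, ψ (K + k + 1) (m + 1) *
        (TLm lam mu0 mu1 gam s * (TMm lam mu0 mu1 gam s) ^ i * Z *
          ((TMm lam mu0 mu1 gam s)⁻¹) ^ i * (TLm lam mu0 mu1 gam s)⁻¹) ^ k) *
        (TLm lam mu0 mu1 gam s * (TMm lam mu0 mu1 gam s) ^ i * Z ^ i)) (∑' p, F p) := by
      have : (fun i => ∑' k, F (k, i)) = fun i => (∑' k : ℕ, ψ (K + k + 1) (m + 1) *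
          (TLm lam mu0 mu1 gam s * (TMm lam mu0 mu1 gam s) ^ i * Z *
            ((TMm lam mu0 mu1 gam s)⁻¹) ^ i * (TLm lam mu0 mu1 gam s)⁻¹) ^ k) *
          (TLm lam mu0 mu1 gam s * (TMm lam mu0 mu1 gam s) ^ i * Z ^ i) :=
        funext fun i => (hg i).symm
      rw [← this]
      exact hcols
    have hleft : HasSum (fun h => ψ K m * TMm lam mu0 mu1 gam s *
        ((TMm lam mu0 mu1 gam s) ^ h * (1 : Matrix (Fin 2) (Fin 2) ℝ) * Z ^ h))
        (ψ K m * TMm lam mu0 mu1 gam s *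
          (∑' h, (TMm lam mu0 mu1 gam s) ^ h * (1 : Matrix (Fin 2) (Fin 2) ℝ) * Z ^ h)) :=
      st16.hasSum_mul_left (st16.aux_summable2 hTMe hZ).hasSum _
    have key1 : ∀ h : ℕ, ψ (K + h + 1) m * Z ^ h
        = ψ K m * TMm lam mu0 mu1 gam s *
            ((TMm lam mu0 mu1 gam s) ^ h * (1 : Matrix (Fin 2) (Fin 2) ℝ) * Z ^ h)
          + ∑ p ∈ Finset.HasAntidiagonal.antidiagonal h, F p := by
      intro h
      rw [hunroll h, Matrix.add_mul, Matrix.sum_mul]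
      congr 1
      · rw [pow_succ']
        simp only [Matrix.mul_one, Matrix.mul_assoc]
      · rw [Finset.Nat.sum_antidiagonal_eq_sum_range_succ_mk]
        apply Finset.sum_congr rfl
        intro j hj
        rw [Finset.mem_range] at hj
        simp only [hFdef]
        have : h - j + j = h := by omega
        rw [this]
        simp only [Matrix.mul_assoc]
    calc ∑' h, ψ (K + h + 1) m * Z ^ h
        = ∑' h, (ψ K m * TMm lam mu0 mu1 gam s *
            ((TMm lam mu0 mu1 gam s) ^ h * (1 : Matrix (Fin 2) (Fin 2) ℝ) * Z ^ h)
          + ∑ p ∈ Finset.HasAntidiagonal.antidiagonal h, F p) := tsum_congr key1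
      _ = (∑' h, ψ K m * TMm lam mu0 mu1 gam s *
            ((TMm lam mu0 mu1 gam s) ^ h * (1 : Matrix (Fin 2) (Fin 2) ℝ) * Z ^ h))
          + ∑' h, ∑ p ∈ Finset.HasAntidiagonal.antidiagonal h, F p :=
          Summable.tsum_add hleft.summable hdiag.summable
      _ = ψ K m * TMm lam mu0 mu1 gam s *
            (∑' h, (TMm lam mu0 mu1 gam s) ^ h * (1 : Matrix (Fin 2) (Fin 2) ℝ) * Z ^ h)
          + ∑' h : ℕ,
            (∑' k : ℕ, ψ (K + k + 1) (m + 1) *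
              (TLm lam mu0 mu1 gam s * (TMm lam mu0 mu1 gam s) ^ h * Z *
                ((TMm lam mu0 mu1 gam s)⁻¹) ^ h * (TLm lam mu0 mu1 gam s)⁻¹) ^ k) *
              (TLm lam mu0 mu1 gam s * (TMm lam mu0 mu1 gam s) ^ h * Z ^ h) := by
          rw [hleft.tsum_eq, hdiag.tsum_eq, hcols'.tsum_eq]
end
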